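/- arXiv:0807.3712 — 3 statements merged into one kernel-verified Lean document; each statement's English description precedes it below -/
import Mathlib

section
/- For every integer n ≥ 1 and every z ∈ ℂ \ {0}, κ_{2n}² Φ*_{2n}(z) = (1/2) z^n [a_n^{−1}(1 + β_n i) σ_n(z) − i b_n^{−1} π_n(z)], where Φ*_{2n} is the reversed polynomial of Φ_{2n}. -/
open MeasureTheory Complex Filter

noncomputable section

/-- The Laurent "cosine" `(z^n + z^(-n))/2`, equal to `cos (n θ)` for `z = e^(iθ)`. -/
def cosL (n : ℕ) (z : ℂ) : ℂ := (z ^ n + (z ^ n)⁻¹) / 2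

/-- The Laurent "sine" `(z^n - z^(-n))/(2 i)`, equal to `sin (n θ)` for `z = e^(iθ)`. -/
def sinL (n : ℕ) (z : ℂ) : ℂ := (z ^ n - (z ^ n)⁻¹) / (2 * I)

/-- The real pairing `⟨f, g⟩_R = ∫ f g dμ`. -/
def innR (μ : Measure ℂ) (f g : ℂ → ℂ) : ℂ := ∫ τ, f τ * g τ ∂μ

/-- A nontrivial probability measure `μ` on the unit circle (infinite support), together
with the data produced by the Gram–Schmidt procedure applied (w.r.t. `⟨·,·⟩_R`) to the
ordered trigonometric system `{1, sin θ, cos θ, …, sin nθ, cos nθ, …}` (written as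
Laurent polynomials via `sin nθ = (z^n - z^(-n))/(2i)`, `cos nθ = (z^n + z^(-n))/2`):
`b n * pii n` is `sin nθ` minus its orthogonal projection onto the span of the previous
elements; `a n * sig n` is `cos nθ` minus its orthogonal projection onto the span of the
previous elements (including `sin nθ`); `a n, b n > 0` are the corresponding norms, so
that `sig n`, `pii n` are the orthonormal trigonometric polynomials; and
`β n = ⟨cos nθ, (b n)⁻¹ pii n⟩_R`.  Conventions: `sig 0 = 1`, `pii 0 = 0`, `β 0 = 0`,
`a 0 = b 0 = 1`. -/
structure OTP where
  μ : Measure ℂ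
  prob : IsProbabilityMeasure μ
  circ : μ {z : ℂ | ‖z‖ = 1}ᶜ = 0
  nontriv : ∀ s : Finset ℂ, μ ((s : Set ℂ))ᶜ ≠ 0
  a : ℕ → ℝ
  b : ℕ → ℝ
  β : ℕ → ℝ
  sig : ℕ → ℂ → ℂ
  pii : ℕ → ℂ → ℂ
  ha : ∀ n, 0 < a n
  hb : ∀ n, 0 < b n
  a_zero : a 0 = 1
  b_zero : b 0 = 1
  β_zero : β 0 = 0
  sig_zero : ∀ z, sig 0 z = 1
  pii_zero : ∀ z, pii 0 z = 0
  pii_span : ∀ n, 1 ≤ n → ∃ c d : ℕ → ℝ, ∀ z : ℂ, z ≠ 0 →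
    (b n : ℂ) * pii n z =
      sinL n z + ∑ k ∈ Finset.range n, ((c k : ℂ) * cosL k z + (d k : ℂ) * sinL k z)
  pii_orth : ∀ n, 1 ≤ n → ∀ k < n,
    innR μ (fun z => (b n : ℂ) * pii n z) (cosL k) = 0 ∧
    innR μ (fun z => (b n : ℂ) * pii n z) (sinL k) = 0
  b_norm : ∀ n, 1 ≤ n →
    ((b n : ℂ)) ^ 2 = innR μ (fun z => (b n : ℂ) * pii n z) (fun z => (b n : ℂ) * pii n z)
  sig_span : ∀ n, 1 ≤ n → ∃ c d : ℕ → ℝ, ∃ e : ℝ, ∀ z : ℂ, z ≠ 0 →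
    (a n : ℂ) * sig n z =
      cosL n z + (e : ℂ) * sinL n z +
        ∑ k ∈ Finset.range n, ((c k : ℂ) * cosL k z + (d k : ℂ) * sinL k z)
  sig_orth : ∀ n, 1 ≤ n →
    (∀ k < n,
      innR μ (fun z => (a n : ℂ) * sig n z) (cosL k) = 0 ∧
      innR μ (fun z => (a n : ℂ) * sig n z) (sinL k) = 0) ∧
    innR μ (fun z => (a n : ℂ) * sig n z) (sinL n) = 0
  a_norm : ∀ n, 1 ≤ n →
    ((a n : ℂ)) ^ 2 = innR μ (fun z => (a n : ℂ) * sig n z) (fun z => (a n : ℂ) * sig n z)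
  β_def : ∀ n, 1 ≤ n →
    (β n : ℂ) = innR μ (cosL n) (fun z => ((b n : ℂ))⁻¹ * pii n z)

/-- The data of `OTP` together with the monic orthogonal polynomials on the unit circle:
`Φ n` is the (unique) monic polynomial of degree `n` with
`∫ conj (τ^j) * Φ n τ dμ = 0` for all `j < n`, and `κ n = ‖Φ n‖⁻¹ > 0` where
`‖Φ n‖² = ∫ |Φ n τ|² dμ`. -/
structure OPUC extends OTP where
  Φ : ℕ → Polynomial ℂ
  Φ_monic : ∀ n, (Φ n).Monic
  Φ_deg : ∀ n, (Φ n).natDegree = n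
  Φ_orth : ∀ n, ∀ j < n, ∫ τ, (starRingEnd ℂ) (τ ^ j) * (Φ n).eval τ ∂μ = 0
  κ : ℕ → ℝ
  κ_pos : ∀ n, 0 < κ n
  κ_def : ∀ n, (κ n) ^ 2 * ∫ τ, ‖(Φ n).eval τ‖ ^ 2 ∂μ = 1

/-- The reversed polynomial `Q*(z) = z^n * conj (Q (1 / conj z))` of a polynomial `Q`
of degree `n`. -/
def revP (n : ℕ) (Q : Polynomial ℂ) (z : ℂ) : ℂ :=
  z ^ n * (starRingEnd ℂ) (Q.eval ((starRingEnd ℂ) z)⁻¹)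

section CircleHelpers
open Polynomial Finset

/-- measurable and bounded on the unit circle -/
def OKc (f : ℂ → ℂ) : Prop :=
  Measurable f ∧ ∃ C, ∀ τ : ℂ, ‖τ‖ = 1 → ‖f τ‖ ≤ C

namespace OKc

lemma const (c : ℂ) : OKc (fun _ => c) :=
  ⟨measurable_const, ‖c‖, fun _ _ => le_rfl⟩

lemma add {f g : ℂ → ℂ} (hf : OKc f) (hg : OKc g) : OKc (fun τ => f τ + g τ) := by
  obtain ⟨mf, Cf, hCf⟩ := hf; obtain ⟨mg, Cg, hCg⟩ := hg
  exact ⟨mf.add mg, Cf + Cg, fun τ hτ =>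
    le_trans (norm_add_le _ _) (add_le_add (hCf τ hτ) (hCg τ hτ))⟩

lemma mul {f g : ℂ → ℂ} (hf : OKc f) (hg : OKc g) : OKc (fun τ => f τ * g τ) := by
  obtain ⟨mf, Cf, hCf⟩ := hf; obtain ⟨mg, Cg, hCg⟩ := hg
  refine ⟨mf.mul mg, |Cf| * |Cg|, fun τ hτ => ?_⟩
  rw [norm_mul]
  exact mul_le_mul ((hCf τ hτ).trans (le_abs_self _)) ((hCg τ hτ).trans (le_abs_self _))
    (norm_nonneg _) (abs_nonneg _)

lemma neg {f : ℂ → ℂ} (hf : OKc f) : OKc (fun τ => - f τ) := by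
  obtain ⟨mf, Cf, hCf⟩ := hf
  exact ⟨mf.neg, Cf, fun τ hτ => by simpa using hCf τ hτ⟩

lemma sub {f g : ℂ → ℂ} (hf : OKc f) (hg : OKc g) : OKc (fun τ => f τ - g τ) := by
  simpa [sub_eq_add_neg] using hf.add hg.neg

lemma sum {ι : Type*} (s : Finset ι) {f : ι → ℂ → ℂ} (h : ∀ i ∈ s, OKc (f i)) :
    OKc (fun τ => ∑ i ∈ s, f i τ) := by
  classical
  induction s using Finset.induction_on with
  | empty => simpa using const 0
  | @insert x s' hx ih =>
    have := (h x (Finset.mem_insert_self x s')).add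
      (ih fun i hi => h i (Finset.mem_insert_of_mem hi))
    simpa [Finset.sum_insert hx] using this

lemma pow (k : ℕ) : OKc (fun τ => τ ^ k) :=
  ⟨measurable_id.pow_const k, 1, fun τ hτ => by simp [map_pow, hτ]⟩

lemma inv_pow (k : ℕ) : OKc (fun τ => (τ ^ k)⁻¹) :=
  ⟨(measurable_id.pow_const k).inv, 1, fun τ hτ => by simp [map_inv₀, map_pow, hτ]⟩

lemma zpow (m : ℤ) : OKc (fun τ => τ ^ m) := by
  rcases m with k | k
  · simpa using pow k
  · simpa [zpow_negSucc] using inv_pow (k + 1)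

lemma conj' {f : ℂ → ℂ} (hf : OKc f) : OKc (fun τ => (starRingEnd ℂ) (f τ)) := by
  obtain ⟨mf, Cf, hCf⟩ := hf
  exact ⟨(Complex.continuous_conj.measurable).comp mf, Cf, fun τ hτ => by simpa using hCf τ hτ⟩

lemma cos (k : ℕ) : OKc (cosL k) := by
  have := ((pow k).add (inv_pow k)).mul (const (2⁻¹))
  convert this using 1; funext τ; simp [cosL, div_eq_mul_inv]

lemma sin (k : ℕ) : OKc (sinL k) := by
  have h := ((pow k).sub (inv_pow k)).mul (const ((2 * I)⁻¹))
  have : (fun τ => (τ ^ k - (τ ^ k)⁻¹) * (2 * I)⁻¹) = sinL k := by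
    funext τ; simp [sinL, div_eq_mul_inv]
  rwa [this] at h

lemma polyeval (W : Polynomial ℂ) : OKc (fun τ => W.eval τ) := by
  have : (fun τ : ℂ => W.eval τ)
      = fun τ => ∑ j ∈ Finset.range (W.natDegree + 1), W.coeff j * τ ^ j := by
    funext τ; exact W.eval_eq_sum_range τ
  rw [this]
  exact sum _ fun j _ => (const _).mul (pow j)

lemma integrable {μ : Measure ℂ} [IsProbabilityMeasure μ]
    (hae : ∀ᵐ τ ∂μ, ‖τ‖ = 1) {f : ℂ → ℂ} (hf : OKc f) : Integrable f μ := by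
  obtain ⟨mf, Cf, hCf⟩ := hf
  refine (integrable_const Cf).mono' mf.aestronglyMeasurable ?_
  filter_upwards [hae] with τ h1
  simpa using hCf τ h1

end OKc

lemma cos_add_I_sin (k : ℕ) (z : ℂ) : cosL k z + I * sinL k z = z ^ k := by
  unfold cosL sinL
  have : (2 * I) ≠ 0 := by simp [Complex.I_ne_zero]
  field_simp
  ring_nf
  by_cases hz : z = 0
  · subst hz; rcases k with _ | k <;> simp
  · rw [inv_pow, pow_mul, sq, mul_inv_cancel_right₀ (pow_ne_zero k hz)]

lemma cos_sub_I_sin (k : ℕ) (z : ℂ) : cosL k z - I * sinL k z = (z ^ k)⁻¹ := by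
  unfold cosL sinL
  have : (2 * I) ≠ 0 := by simp [Complex.I_ne_zero]
  field_simp
  ring_nf

lemma integral_mul_comm' (μ : Measure ℂ) (f g : ℂ → ℂ) :
    ∫ τ, f τ * g τ ∂μ = ∫ τ, g τ * f τ ∂μ := by
  congr 1; funext τ; ring

lemma moment_expand (μ : Measure ℂ) (W : Polynomial ℂ) (f : ℂ → ℂ)
    (hint : ∀ j : ℕ, Integrable (fun τ => (starRingEnd ℂ) (τ ^ j) * f τ) μ) :
    ∫ τ, (starRingEnd ℂ) (W.eval τ) * f τ ∂μ
      = ∑ j ∈ Finset.range (W.natDegree + 1),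
          (starRingEnd ℂ) (W.coeff j) * ∫ τ, (starRingEnd ℂ) (τ ^ j) * f τ ∂μ := by
  have h1 : (fun τ => (starRingEnd ℂ) (W.eval τ) * f τ)
      = fun τ => ∑ j ∈ Finset.range (W.natDegree + 1),
          (starRingEnd ℂ) (W.coeff j) * ((starRingEnd ℂ) (τ ^ j) * f τ) := by
    funext τ
    rw [W.eval_eq_sum_range τ, map_sum, Finset.sum_mul]
    congr 1; funext j; rw [map_mul]; ring
  rw [h1, integral_finset_sum _ (fun j _ => (hint j).const_mul _)]
  congr 1; funext j; exact MeasureTheory.integral_const_mul _ _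

section helpers
variable {μ : Measure ℂ} [IsProbabilityMeasure μ] (hae : ∀ᵐ τ ∂μ, ‖τ‖ = 1)
include hae

lemma int_split2 {f u v : ℂ → ℂ} (hf : OKc f) (hu : OKc u) (hv : OKc v) (y : ℂ) :
    ∫ τ, f τ * (u τ + y * v τ) ∂μ
      = (∫ τ, f τ * u τ ∂μ) + y * ∫ τ, f τ * v τ ∂μ := by
  have h1 : (fun τ => f τ * (u τ + y * v τ))
      = fun τ => f τ * u τ + y * (f τ * v τ) := by funext τ; ring
  rw [h1, integral_add ((hf.mul hu).integrable hae)
    (((OKc.mul hf hv).integrable hae).const_mul y), integral_const_mul]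

lemma int_split2m {f u v : ℂ → ℂ} (hf : OKc f) (hu : OKc u) (hv : OKc v) (y : ℂ) :
    ∫ τ, f τ * (u τ - y * v τ) ∂μ
      = (∫ τ, f τ * u τ ∂μ) - y * ∫ τ, f τ * v τ ∂μ := by
  have h1 : (fun τ => f τ * (u τ - y * v τ))
      = fun τ => f τ * u τ - y * (f τ * v τ) := by funext τ; ring
  rw [h1, integral_sub ((hf.mul hu).integrable hae)
    (((OKc.mul hf hv).integrable hae).const_mul y), integral_const_mul]

lemma int_split_sub {A B : ℂ → ℂ} (hA : OKc A) (hB : OKc B) (x y : ℂ) :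
    ∫ τ, (x * A τ - y * B τ) ∂μ = x * (∫ τ, A τ ∂μ) - y * ∫ τ, B τ ∂μ := by
  rw [integral_sub ((hA.integrable hae).const_mul x) ((hB.integrable hae).const_mul y),
    integral_const_mul, integral_const_mul]


lemma int_expand {f g : ℂ → ℂ} (hf : OKc f) (hg : OKc g) (n : ℕ) (c d : ℕ → ℝ) :
    ∫ τ, f τ * (g τ + ∑ k ∈ Finset.range n, ((c k : ℂ) * cosL k τ + (d k : ℂ) * sinL k τ)) ∂μ
      = (∫ τ, f τ * g τ ∂μ)
        + ∑ k ∈ Finset.range n,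
            ((c k : ℂ) * (∫ τ, f τ * cosL k τ ∂μ) + (d k : ℂ) * ∫ τ, f τ * sinL k τ ∂μ) := by
  have h1 : (fun τ => f τ * (g τ + ∑ k ∈ Finset.range n, ((c k : ℂ) * cosL k τ + (d k : ℂ) * sinL k τ)))
      = fun τ => f τ * g τ + ∑ k ∈ Finset.range n,
          ((c k : ℂ) * (f τ * cosL k τ) + (d k : ℂ) * (f τ * sinL k τ)) := by
    funext τ
    rw [mul_add, Finset.mul_sum]
    congr 1
    refine Finset.sum_congr rfl fun k _ => by ring
  have hok : ∀ k ∈ Finset.range n, OKc (fun τ =>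
      (c k : ℂ) * (f τ * cosL k τ) + (d k : ℂ) * (f τ * sinL k τ)) := by
    intro k _
    exact OKc.add ((OKc.const _).mul (hf.mul (OKc.cos k))) ((OKc.const _).mul (hf.mul (OKc.sin k)))
  rw [h1, integral_add ((hf.mul hg).integrable hae)
      (((OKc.sum _ hok).integrable hae)),
    integral_finset_sum _ (fun k hk => ((hok k hk).integrable hae))]
  congr 1
  refine Finset.sum_congr rfl fun k _ => ?_
  rw [integral_add (((hf.mul (OKc.cos k)).integrable hae).const_mul _)
    (((hf.mul (OKc.sin k)).integrable hae).const_mul _), integral_const_mul, integral_const_mul]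

end helpers
set_option maxHeartbeats 1600000 in
/-- Mutual representation, even case: for `n ≥ 1` and `z ≠ 0`,
`κ_{2n}² Φ*_{2n}(z) = (1/2) z^n [a_n⁻¹ (1 + β_n i) σ_n(z) - i b_n⁻¹ π_n(z)]`. -/
theorem mutual_representation_even (D : OPUC) (n : ℕ) (hn : 1 ≤ n) (z : ℂ) (hz : z ≠ 0) :
    ((D.κ (2 * n) : ℂ)) ^ 2 * revP (2 * n) (D.Φ (2 * n)) z =
      (1 / 2) * z ^ n *
        (((D.a n : ℂ))⁻¹ * (1 + (D.β n : ℂ) * I) * D.sig n z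
          - I * ((D.b n : ℂ))⁻¹ * D.pii n z) := by
  classical
  obtain ⟨c, d, e, hsig⟩ := D.sig_span n hn
  obtain ⟨c', d', hpii⟩ := D.pii_span n hn
  set μ := D.μ with hμdef
  haveI : IsProbabilityMeasure μ := D.prob
  set aC : ℂ := ((D.a n : ℝ) : ℂ) with haCdef
  set bC : ℂ := ((D.b n : ℝ) : ℂ) with hbCdef
  set βC : ℂ := ((D.β n : ℝ) : ℂ) with hβCdef
  set κC : ℂ := ((D.κ (2 * n) : ℝ) : ℂ) with hκCdef
  have hane : aC ≠ 0 := by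
    simp only [haCdef, ne_eq, Complex.ofReal_eq_zero]; exact (D.ha n).ne'
  have hbne : bC ≠ 0 := by
    simp only [hbCdef, ne_eq, Complex.ofReal_eq_zero]; exact (D.hb n).ne'
  have hae : ∀ᵐ τ ∂μ, ‖τ‖ = 1 := by
    rw [ae_iff]; exact D.circ
  have hae0 : ∀ᵐ τ ∂μ, τ ≠ 0 ∧ (starRingEnd ℂ) τ = τ⁻¹ := by
    filter_upwards [hae] with τ h1
    have h0 : τ ≠ 0 := by
      intro h; rw [h] at h1; simp at h1
    refine ⟨h0, ?_⟩
    have hm : τ * (starRingEnd ℂ) τ = 1 := by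
      rw [Complex.mul_conj]
      norm_cast
      rw [← Complex.sq_norm, h1, one_pow]
    field_simp
    linear_combination hm
  -- the Laurent expansions
  set Sf : ℂ → ℂ := fun w => cosL n w + (e : ℂ) * sinL n w
      + ∑ k ∈ Finset.range n, ((c k : ℂ) * cosL k w + (d k : ℂ) * sinL k w) with hSfdef
  set Pf : ℂ → ℂ := fun w => sinL n w
      + ∑ k ∈ Finset.range n, ((c' k : ℂ) * cosL k w + (d' k : ℂ) * sinL k w) with hPfdef
  have okSf : OKc Sf :=
    ((OKc.cos n).add ((OKc.const _).mul (OKc.sin n))).add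
      (OKc.sum _ fun k _ => ((OKc.const _).mul (OKc.cos k)).add ((OKc.const _).mul (OKc.sin k)))
  have okPf : OKc Pf :=
    (OKc.sin n).add
      (OKc.sum _ fun k _ => ((OKc.const _).mul (OKc.cos k)).add ((OKc.const _).mul (OKc.sin k)))
  have hSz : ∀ w : ℂ, w ≠ 0 → Sf w = aC * D.sig n w := fun w hw => (hsig w hw).symm
  have hPz : ∀ w : ℂ, w ≠ 0 → Pf w = bC * D.pii n w := fun w hw => (hpii w hw).symm
  have haS : ∀ᵐ τ ∂μ, aC * D.sig n τ = Sf τ := by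
    filter_upwards [hae0] with τ hτ; exact (hSz τ hτ.1).symm
  have haP : ∀ᵐ τ ∂μ, bC * D.pii n τ = Pf τ := by
    filter_upwards [hae0] with τ hτ; exact (hPz τ hτ.1).symm
  -- ported orthogonality hypotheses
  have hSc : ∀ k, k < n → ∫ τ, Sf τ * cosL k τ ∂μ = 0 := by
    intro k hk
    have h := ((D.sig_orth n hn).1 k hk).1
    simp only [innR] at h
    calc ∫ τ, Sf τ * cosL k τ ∂μ = ∫ τ, (aC * D.sig n τ) * cosL k τ ∂μ :=
          integral_congr_ae (by filter_upwards [haS] with τ hτ; rw [hτ])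
      _ = 0 := h
  have hSs : ∀ k, k < n → ∫ τ, Sf τ * sinL k τ ∂μ = 0 := by
    intro k hk
    have h := ((D.sig_orth n hn).1 k hk).2
    simp only [innR] at h
    calc ∫ τ, Sf τ * sinL k τ ∂μ = ∫ τ, (aC * D.sig n τ) * sinL k τ ∂μ :=
          integral_congr_ae (by filter_upwards [haS] with τ hτ; rw [hτ])
      _ = 0 := h
  have hSsn : ∫ τ, Sf τ * sinL n τ ∂μ = 0 := by
    have h := (D.sig_orth n hn).2
    simp only [innR] at h
    calc ∫ τ, Sf τ * sinL n τ ∂μ = ∫ τ, (aC * D.sig n τ) * sinL n τ ∂μ :=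
          integral_congr_ae (by filter_upwards [haS] with τ hτ; rw [hτ])
      _ = 0 := h
  have hSS : ∫ τ, Sf τ * Sf τ ∂μ = aC ^ 2 := by
    have h := D.a_norm n hn
    simp only [innR] at h
    calc ∫ τ, Sf τ * Sf τ ∂μ = ∫ τ, (aC * D.sig n τ) * (aC * D.sig n τ) ∂μ :=
          integral_congr_ae (by filter_upwards [haS] with τ hτ; rw [hτ])
      _ = aC ^ 2 := h.symm
  have hPc : ∀ k, k < n → ∫ τ, Pf τ * cosL k τ ∂μ = 0 := by
    intro k hk
    have h := (D.pii_orth n hn k hk).1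
    simp only [innR] at h
    calc ∫ τ, Pf τ * cosL k τ ∂μ = ∫ τ, (bC * D.pii n τ) * cosL k τ ∂μ :=
          integral_congr_ae (by filter_upwards [haP] with τ hτ; rw [hτ])
      _ = 0 := h
  have hPs : ∀ k, k < n → ∫ τ, Pf τ * sinL k τ ∂μ = 0 := by
    intro k hk
    have h := (D.pii_orth n hn k hk).2
    simp only [innR] at h
    calc ∫ τ, Pf τ * sinL k τ ∂μ = ∫ τ, (bC * D.pii n τ) * sinL k τ ∂μ :=
          integral_congr_ae (by filter_upwards [haP] with τ hτ; rw [hτ])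
      _ = 0 := h
  have hPP : ∫ τ, Pf τ * Pf τ ∂μ = bC ^ 2 := by
    have h := D.b_norm n hn
    simp only [innR] at h
    calc ∫ τ, Pf τ * Pf τ ∂μ = ∫ τ, (bC * D.pii n τ) * (bC * D.pii n τ) ∂μ :=
          integral_congr_ae (by filter_upwards [haP] with τ hτ; rw [hτ])
      _ = bC ^ 2 := h.symm
  have hPcn : ∫ τ, Pf τ * cosL n τ ∂μ = bC ^ 2 * βC := by
    have h := D.β_def n hn
    simp only [innR] at h
    have h2 : ∫ τ, cosL n τ * (bC⁻¹ * D.pii n τ) ∂μ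
        = bC⁻¹ * (bC⁻¹ * ∫ τ, Pf τ * cosL n τ ∂μ) := by
      rw [← integral_const_mul, ← integral_const_mul]
      refine integral_congr_ae ?_
      filter_upwards [haP] with τ hτ
      rw [← hτ]
      field_simp
    rw [h2] at h
    rw [hβCdef, h]
    field_simp
  -- derived normalization facts
  have hScn : ∫ τ, Sf τ * cosL n τ ∂μ = aC ^ 2 := by
    have h1 : ∫ τ, Sf τ * ((cosL n τ + (e : ℂ) * sinL n τ)
          + ∑ k ∈ Finset.range n, ((c k : ℂ) * cosL k τ + (d k : ℂ) * sinL k τ)) ∂μ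
        = (∫ τ, Sf τ * (cosL n τ + (e : ℂ) * sinL n τ) ∂μ)
          + ∑ k ∈ Finset.range n, ((c k : ℂ) * (∫ τ, Sf τ * cosL k τ ∂μ)
              + (d k : ℂ) * ∫ τ, Sf τ * sinL k τ ∂μ) :=
      int_expand hae okSf ((OKc.cos n).add ((OKc.const _).mul (OKc.sin n))) n c d
    have h2 : ∫ τ, Sf τ * Sf τ ∂μ
        = ∫ τ, Sf τ * ((cosL n τ + (e : ℂ) * sinL n τ)
            + ∑ k ∈ Finset.range n, ((c k : ℂ) * cosL k τ + (d k : ℂ) * sinL k τ)) ∂μ := by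
      congr 1
    have h3 : ∫ τ, Sf τ * (cosL n τ + (e : ℂ) * sinL n τ) ∂μ
        = (∫ τ, Sf τ * cosL n τ ∂μ) + (e : ℂ) * ∫ τ, Sf τ * sinL n τ ∂μ :=
      int_split2 hae okSf (OKc.cos n) (OKc.sin n) (e : ℂ)
    have h4 : ∑ k ∈ Finset.range n, ((c k : ℂ) * (∫ τ, Sf τ * cosL k τ ∂μ)
        + (d k : ℂ) * ∫ τ, Sf τ * sinL k τ ∂μ) = 0 := by
      refine Finset.sum_eq_zero fun k hk => ?_
      rw [hSc k (Finset.mem_range.mp hk), hSs k (Finset.mem_range.mp hk)]; ring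
    rw [h2, h1, h3, h4, hSsn] at hSS
    rw [← hSS]; ring
  have hPsn : ∫ τ, Pf τ * sinL n τ ∂μ = bC ^ 2 := by
    have h1 : ∫ τ, Pf τ * (sinL n τ
          + ∑ k ∈ Finset.range n, ((c' k : ℂ) * cosL k τ + (d' k : ℂ) * sinL k τ)) ∂μ
        = (∫ τ, Pf τ * sinL n τ ∂μ)
          + ∑ k ∈ Finset.range n, ((c' k : ℂ) * (∫ τ, Pf τ * cosL k τ ∂μ)
              + (d' k : ℂ) * ∫ τ, Pf τ * sinL k τ ∂μ) :=
      int_expand hae okPf (OKc.sin n) n c' d'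
    have h2 : ∫ τ, Pf τ * Pf τ ∂μ
        = ∫ τ, Pf τ * (sinL n τ
            + ∑ k ∈ Finset.range n, ((c' k : ℂ) * cosL k τ + (d' k : ℂ) * sinL k τ)) ∂μ := by
      congr 1
    have h4 : ∑ k ∈ Finset.range n, ((c' k : ℂ) * (∫ τ, Pf τ * cosL k τ ∂μ)
        + (d' k : ℂ) * ∫ τ, Pf τ * sinL k τ ∂μ) = 0 := by
      refine Finset.sum_eq_zero fun k hk => ?_
      rw [hPc k (Finset.mem_range.mp hk), hPs k (Finset.mem_range.mp hk)]; ring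
    rw [h2, h1, h4] at hPP
    rw [← hPP]; ring
  -- moment computations
  have mSf : ∀ m : ℤ, m.natAbs ≤ n →
      ∫ τ, Sf τ * τ ^ m ∂μ = if m.natAbs = n then aC ^ 2 else 0 := by
    intro m hm
    rcases le_or_gt 0 m with h0 | h0
    · obtain ⟨k, rfl⟩ := Int.eq_ofNat_of_zero_le h0
      have hk : k ≤ n := by simpa using hm
      have hpt : (fun τ : ℂ => Sf τ * τ ^ (k : ℤ))
          = fun τ => Sf τ * (cosL k τ + I * sinL k τ) := by
        funext τ; rw [cos_add_I_sin, zpow_natCast]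
      rw [show ((k : ℤ)).natAbs = k from Int.natAbs_natCast k, hpt,
        int_split2 hae okSf (OKc.cos k) (OKc.sin k) I]
      rcases hk.eq_or_lt with rfl | hk2
      · rw [hScn, hSsn]; simp
      · rw [hSc k hk2, hSs k hk2]; simp [hk2.ne]
    · have hrep : m = -((m.natAbs : ℕ) : ℤ) := by omega
      set k := m.natAbs with hkdef
      have hk : k ≤ n := hm
      rw [hrep]
      have hpt : (fun τ : ℂ => Sf τ * τ ^ (-(k : ℤ)))
          = fun τ => Sf τ * (cosL k τ - I * sinL k τ) := by
        funext τ; rw [cos_sub_I_sin, zpow_neg, zpow_natCast]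
      rw [hpt, int_split2m hae okSf (OKc.cos k) (OKc.sin k) I]
      rcases hk.eq_or_lt with rfl | hk2
      · rw [hScn, hSsn]; simp
      · rw [hSc k hk2, hSs k hk2]; simp [hk2.ne]
  have mPf : ∀ m : ℤ, m.natAbs ≤ n →
      ∫ τ, Pf τ * τ ^ m ∂μ = if m = (n : ℤ) then bC ^ 2 * (βC + I)
        else if m = -(n : ℤ) then bC ^ 2 * (βC - I) else 0 := by
    intro m hm
    rcases le_or_gt 0 m with h0 | h0
    · obtain ⟨k, rfl⟩ := Int.eq_ofNat_of_zero_le h0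
      have hk : k ≤ n := by simpa using hm
      have hpt : (fun τ : ℂ => Pf τ * τ ^ (k : ℤ))
          = fun τ => Pf τ * (cosL k τ + I * sinL k τ) := by
        funext τ; rw [cos_add_I_sin, zpow_natCast]
      rw [hpt, int_split2 hae okPf (OKc.cos k) (OKc.sin k) I]
      rcases hk.eq_or_lt with rfl | hk2
      · rw [hPcn, hPsn, if_pos rfl]; ring
      · rw [hPc k hk2, hPs k hk2, if_neg (by omega), if_neg (by omega)]; ring
    · have hrep : m = -((m.natAbs : ℕ) : ℤ) := by omega
      set k := m.natAbs with hkdef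
      have hk : k ≤ n := hm
      rw [hrep]
      have hpt : (fun τ : ℂ => Pf τ * τ ^ (-(k : ℤ)))
          = fun τ => Pf τ * (cosL k τ - I * sinL k τ) := by
        funext τ; rw [cos_sub_I_sin, zpow_neg, zpow_natCast]
      rw [hpt, int_split2m hae okPf (OKc.cos k) (OKc.sin k) I]
      rcases hk.eq_or_lt with rfl | hk2
      · rw [hPcn, hPsn, if_neg (by omega), if_pos rfl]; ring
      · rw [hPc k hk2, hPs k hk2, if_neg (by omega), if_neg (by omega)]; ring
  -- the polynomials
  set Φ2 : Polynomial ℂ := D.Φ (2 * n) with hΦ2def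
  have hdeg : Φ2.natDegree = 2 * n := D.Φ_deg (2 * n)
  have hmon : Φ2.Monic := D.Φ_monic (2 * n)
  set PCp : ℕ → Polynomial ℂ := fun k => Polynomial.C (1 / 2 : ℂ)
      * (Polynomial.X ^ (n + k) + Polynomial.X ^ (n - k)) with hPCpdef
  set PSp : ℕ → Polynomial ℂ := fun k => Polynomial.C (1 / (2 * I) : ℂ)
      * (Polynomial.X ^ (n + k) - Polynomial.X ^ (n - k)) with hPSpdef
  set SPp : Polynomial ℂ := PCp n + Polynomial.C (e : ℂ) * PSp n
      + ∑ k ∈ Finset.range n, (Polynomial.C (c k : ℂ) * PCp k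
          + Polynomial.C (d k : ℂ) * PSp k) with hSPpdef
  set PPp : Polynomial ℂ := PSp n
      + ∑ k ∈ Finset.range n, (Polynomial.C (c' k : ℂ) * PCp k
          + Polynomial.C (d' k : ℂ) * PSp k) with hPPpdef
  set c₁ : ℂ := (1 / 2 : ℂ) * aC⁻¹ * aC⁻¹ * (1 + βC * I) with hc₁def
  set c₂ : ℂ := (1 / 2 : ℂ) * I * bC⁻¹ * bC⁻¹ with hc₂def
  set Pp : Polynomial ℂ := Polynomial.C c₁ * SPp - Polynomial.C c₂ * PPp with hPpdef
  set Qp : Polynomial ℂ := ∑ j ∈ Finset.range (2 * n + 1),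
      Polynomial.C ((starRingEnd ℂ) (Φ2.coeff j)) * Polynomial.X ^ (2 * n - j) with hQpdef
  set Rp : Polynomial ℂ := Pp - Polynomial.C (κC ^ 2) * Qp with hRpdef
  -- evaluation lemmas
  have evPC : ∀ k, k ≤ n → ∀ w : ℂ, w ≠ 0 → (PCp k).eval w = w ^ n * cosL k w := by
    intro k hk w hw
    simp only [hPCpdef, Polynomial.eval_mul, Polynomial.eval_C, Polynomial.eval_add,
      Polynomial.eval_pow, Polynomial.eval_X]
    rw [cosL, pow_sub₀ w hw hk, pow_add]
    have : (w : ℂ) ^ k ≠ 0 := pow_ne_zero _ hw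
    field_simp
  have evPS : ∀ k, k ≤ n → ∀ w : ℂ, w ≠ 0 → (PSp k).eval w = w ^ n * sinL k w := by
    intro k hk w hw
    simp only [hPSpdef, Polynomial.eval_mul, Polynomial.eval_C, Polynomial.eval_sub,
      Polynomial.eval_pow, Polynomial.eval_X]
    rw [sinL, pow_sub₀ w hw hk, pow_add]
    have h1 : (w : ℂ) ^ k ≠ 0 := pow_ne_zero _ hw
    have h2 : (I : ℂ) ≠ 0 := Complex.I_ne_zero
    field_simp
  have evSP : ∀ w : ℂ, w ≠ 0 → SPp.eval w = w ^ n * Sf w := by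
    intro w hw
    simp only [hSPpdef, Polynomial.eval_add, Polynomial.eval_mul, Polynomial.eval_C,
      Polynomial.eval_finset_sum]
    rw [evPC n le_rfl w hw, evPS n le_rfl w hw]
    have hsum : ∑ k ∈ Finset.range n,
          ((c k : ℂ) * Polynomial.eval w (PCp k) + (d k : ℂ) * Polynomial.eval w (PSp k))
        = ∑ k ∈ Finset.range n, w ^ n * ((c k : ℂ) * cosL k w + (d k : ℂ) * sinL k w) := by
      refine Finset.sum_congr rfl fun k hk => ?_
      rw [evPC k (Finset.mem_range.mp hk).le w hw, evPS k (Finset.mem_range.mp hk).le w hw]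
      ring
    rw [hsum, hSfdef]
    rw [mul_add, mul_add, Finset.mul_sum]
    ring
  have evPP : ∀ w : ℂ, w ≠ 0 → PPp.eval w = w ^ n * Pf w := by
    intro w hw
    simp only [hPPpdef, Polynomial.eval_add, Polynomial.eval_mul, Polynomial.eval_C,
      Polynomial.eval_finset_sum]
    rw [evPS n le_rfl w hw]
    have hsum : ∑ k ∈ Finset.range n,
          ((c' k : ℂ) * Polynomial.eval w (PCp k) + (d' k : ℂ) * Polynomial.eval w (PSp k))
        = ∑ k ∈ Finset.range n, w ^ n * ((c' k : ℂ) * cosL k w + (d' k : ℂ) * sinL k w) := by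
      refine Finset.sum_congr rfl fun k hk => ?_
      rw [evPC k (Finset.mem_range.mp hk).le w hw, evPS k (Finset.mem_range.mp hk).le w hw]
      ring
    rw [hsum, hPfdef]
    rw [mul_add, Finset.mul_sum]
  have evPp : ∀ w : ℂ, w ≠ 0 → Pp.eval w = c₁ * (w ^ n * Sf w) - c₂ * (w ^ n * Pf w) := by
    intro w hw
    rw [hPpdef, Polynomial.eval_sub, Polynomial.eval_mul, Polynomial.eval_mul,
      Polynomial.eval_C, Polynomial.eval_C, evSP w hw, evPP w hw]
  have evQp : ∀ w : ℂ, w ≠ 0 → Qp.eval w = revP (2 * n) Φ2 w := by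
    intro w hw
    rw [revP]
    have hΦev : Φ2.eval ((starRingEnd ℂ) w)⁻¹
        = ∑ j ∈ Finset.range (2 * n + 1), Φ2.coeff j * (((starRingEnd ℂ) w)⁻¹) ^ j := by
      rw [Polynomial.eval_eq_sum_range, hdeg]
    rw [hΦev, map_sum, Finset.mul_sum, hQpdef, Polynomial.eval_finset_sum]
    refine Finset.sum_congr rfl fun j hj => ?_
    have hj2 : j ≤ 2 * n := Nat.lt_succ_iff.mp (Finset.mem_range.mp hj)
    rw [Polynomial.eval_mul, Polynomial.eval_C, Polynomial.eval_pow, Polynomial.eval_X,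
      map_mul, map_pow, map_inv₀, Complex.conj_conj, pow_sub₀ w hw hj2]
    ring
  -- degree bounds
  have degPC : ∀ k, k ≤ n → (PCp k).natDegree ≤ 2 * n := by
    intro k hkn
    rw [hPCpdef]
    refine le_trans (Polynomial.natDegree_C_mul_le _ _) ?_
    refine le_trans (Polynomial.natDegree_add_le _ _) ?_
    simp only [Polynomial.natDegree_X_pow]
    omega
  have degPS : ∀ k, k ≤ n → (PSp k).natDegree ≤ 2 * n := by
    intro k hkn
    rw [hPSpdef]
    refine le_trans (Polynomial.natDegree_C_mul_le _ _) ?_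
    refine le_trans (Polynomial.natDegree_sub_le _ _) ?_
    simp only [Polynomial.natDegree_X_pow]
    omega
  have degPp : Pp.natDegree ≤ 2 * n := by
    rw [hPpdef]
    refine le_trans (Polynomial.natDegree_sub_le _ _) (max_le ?_ ?_)
    · refine le_trans (Polynomial.natDegree_C_mul_le _ _) ?_
      rw [hSPpdef]
      refine le_trans (Polynomial.natDegree_add_le _ _) (max_le (le_trans
        (Polynomial.natDegree_add_le _ _) (max_le (degPC n le_rfl)
          (le_trans (Polynomial.natDegree_C_mul_le _ _) (degPS n le_rfl)))) ?_)
      refine Polynomial.natDegree_sum_le_of_forall_le _ _ fun k hk => ?_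
      refine le_trans (Polynomial.natDegree_add_le _ _) (max_le ?_ ?_)
      · exact le_trans (Polynomial.natDegree_C_mul_le _ _) (degPC k (Finset.mem_range.mp hk).le)
      · exact le_trans (Polynomial.natDegree_C_mul_le _ _) (degPS k (Finset.mem_range.mp hk).le)
    · refine le_trans (Polynomial.natDegree_C_mul_le _ _) ?_
      rw [hPPpdef]
      refine le_trans (Polynomial.natDegree_add_le _ _) (max_le (degPS n le_rfl) ?_)
      refine Polynomial.natDegree_sum_le_of_forall_le _ _ fun k hk => ?_
      refine le_trans (Polynomial.natDegree_add_le _ _) (max_le ?_ ?_)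
      · exact le_trans (Polynomial.natDegree_C_mul_le _ _) (degPC k (Finset.mem_range.mp hk).le)
      · exact le_trans (Polynomial.natDegree_C_mul_le _ _) (degPS k (Finset.mem_range.mp hk).le)
  have degQp : Qp.natDegree ≤ 2 * n := by
    rw [hQpdef]
    refine Polynomial.natDegree_sum_le_of_forall_le _ _ fun j _ => ?_
    exact le_trans (Polynomial.natDegree_C_mul_X_pow_le _ _) (by omega)
  have degRp : Rp.natDegree ≤ 2 * n := by
    rw [hRpdef]
    exact le_trans (Polynomial.natDegree_sub_le _ _)
      (max_le degPp (le_trans (Polynomial.natDegree_C_mul_le _ _) degQp))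
  -- integrability helpers
  have hintP : ∀ j : ℕ, Integrable (fun τ => (starRingEnd ℂ) (τ ^ j) * Pp.eval τ) μ :=
    fun j => (((OKc.pow j).conj').mul (OKc.polyeval Pp)).integrable hae
  have hintQ : ∀ j : ℕ, Integrable (fun τ => (starRingEnd ℂ) (τ ^ j) * Qp.eval τ) μ :=
    fun j => (((OKc.pow j).conj').mul (OKc.polyeval Qp)).integrable hae
  have hintR : ∀ j : ℕ, Integrable (fun τ => (starRingEnd ℂ) (τ ^ j) * Rp.eval τ) μ :=
    fun j => (((OKc.pow j).conj').mul (OKc.polyeval Rp)).integrable hae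
  have hintΦ : ∀ j : ℕ, Integrable (fun τ => (starRingEnd ℂ) (τ ^ j) * Φ2.eval τ) μ :=
    fun j => (((OKc.pow j).conj').mul (OKc.polyeval Φ2)).integrable hae
  -- moments of Pp
  have hT : ∀ j : ℕ, j ≤ 2 * n →
      ∫ τ, (starRingEnd ℂ) (τ ^ j) * Pp.eval τ ∂μ = if j = 0 then 1 else 0 := by
    intro j hj
    have haeq : ∀ᵐ τ ∂μ, (starRingEnd ℂ) (τ ^ j) * Pp.eval τ
        = c₁ * (Sf τ * τ ^ ((n : ℤ) - j)) - c₂ * (Pf τ * τ ^ ((n : ℤ) - j)) := by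
      filter_upwards [hae0] with τ hτ
      obtain ⟨h0, hcj⟩ := hτ
      have e1 : (starRingEnd ℂ) (τ ^ j) = τ ^ (-(j : ℤ)) := by
        rw [map_pow, hcj, zpow_neg, zpow_natCast, inv_pow]
      have e2 : τ ^ (-(j : ℤ)) * τ ^ (n : ℕ) = τ ^ ((n : ℤ) - j) := by
        rw [← zpow_natCast τ n, ← zpow_add₀ h0]
        congr 1
        omega
      rw [evPp τ h0, e1]
      calc τ ^ (-(j : ℤ)) * (c₁ * (τ ^ n * Sf τ) - c₂ * (τ ^ n * Pf τ))
          = c₁ * (Sf τ * (τ ^ (-(j : ℤ)) * τ ^ n)) - c₂ * (Pf τ * (τ ^ (-(j : ℤ)) * τ ^ n)) := by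
            ring
        _ = _ := by rw [e2]
    rw [integral_congr_ae haeq,
      int_split_sub hae (okSf.mul (OKc.zpow _)) (okPf.mul (OKc.zpow _)) c₁ c₂,
      mSf _ (by omega), mPf _ (by omega)]
    by_cases hj0 : j = 0
    · subst hj0
      rw [if_pos (show ((n : ℤ) - (0 : ℕ)).natAbs = n by omega),
        if_pos (show (n : ℤ) - (0 : ℕ) = (n : ℤ) by omega), if_pos rfl,
        hc₁def, hc₂def]
      field_simp
      linear_combination (-1:ℂ) * Complex.I_sq
    · by_cases hj2 : j = 2 * n
      · subst hj2
        rw [if_pos (show ((n : ℤ) - (2 * n : ℕ)).natAbs = n by omega),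
          if_neg (show ¬((n : ℤ) - (2 * n : ℕ) = (n : ℤ)) by omega),
          if_pos (show (n : ℤ) - (2 * n : ℕ) = -(n : ℤ) by omega),
          if_neg (show ¬(2 * n = 0) by omega), hc₁def, hc₂def]
        field_simp
        linear_combination (1:ℂ) * Complex.I_sq
      · rw [if_neg (show ¬(((n : ℤ) - j).natAbs = n) by omega),
          if_neg (show ¬((n : ℤ) - j = (n : ℤ)) by omega),
          if_neg (show ¬((n : ℤ) - j = -(n : ℤ)) by omega), if_neg hj0]
        ring
  -- moments of Qp
  have hV : ∀ j : ℕ, 1 ≤ j → j ≤ 2 * n →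
      ∫ τ, (starRingEnd ℂ) (τ ^ j) * Qp.eval τ ∂μ = 0 := by
    intro j hj1 hj2
    have haeq : ∀ᵐ τ ∂μ, (starRingEnd ℂ) (τ ^ j) * Qp.eval τ
        = (starRingEnd ℂ) ((starRingEnd ℂ) (τ ^ (2 * n - j)) * Φ2.eval τ) := by
      filter_upwards [hae0] with τ hτ
      obtain ⟨h0, hcj⟩ := hτ
      have hQev : Qp.eval τ = τ ^ (2 * n) * (starRingEnd ℂ) (Φ2.eval τ) := by
        rw [evQp τ h0, revP, hcj, inv_inv]
      rw [hQev, map_mul, Complex.conj_conj, map_pow, hcj, pow_sub₀ τ h0 hj2, inv_pow]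
      ring
    rw [integral_congr_ae haeq, integral_conj]
    have horth := D.Φ_orth (2 * n) (2 * n - j) (by omega)
    rw [← hμdef, ← hΦ2def] at horth
    rw [horth, map_zero]
  -- the zeroth moment of Qp
  have hQint0 : ∫ τ, Qp.eval τ ∂μ
      = ((∫ τ, Complex.normSq (Φ2.eval τ) ∂μ : ℝ) : ℂ) := by
    have haeq : ∀ᵐ τ ∂μ, Qp.eval τ
        = (starRingEnd ℂ) ((starRingEnd ℂ) (τ ^ (2 * n)) * Φ2.eval τ) := by
      filter_upwards [hae0] with τ hτ
      obtain ⟨h0, hcj⟩ := hτ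
      rw [evQp τ h0, revP, hcj, inv_inv, map_mul, Complex.conj_conj]
    rw [integral_congr_ae haeq, integral_conj]
    have hsplit : ∫ τ, (starRingEnd ℂ) (τ ^ (2 * n)) * Φ2.eval τ ∂μ
        = (∫ τ, (starRingEnd ℂ) ((Polynomial.X ^ (2 * n) - Φ2).eval τ) * Φ2.eval τ ∂μ)
          + ∫ τ, (starRingEnd ℂ) (Φ2.eval τ) * Φ2.eval τ ∂μ := by
      rw [← integral_add ((((OKc.polyeval _).conj').mul (OKc.polyeval Φ2)).integrable hae)
        ((((OKc.polyeval Φ2).conj').mul (OKc.polyeval Φ2)).integrable hae)]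
      congr 1
      funext τ
      rw [Polynomial.eval_sub, Polynomial.eval_pow, Polynomial.eval_X, map_sub]
      ring
    have hE : ∫ τ, (starRingEnd ℂ) ((Polynomial.X ^ (2 * n) - Φ2).eval τ) * Φ2.eval τ ∂μ
        = 0 := by
      rw [moment_expand μ (Polynomial.X ^ (2 * n) - Φ2) Φ2.eval hintΦ]
      refine Finset.sum_eq_zero fun j hj => ?_
      have hjle : j ≤ 2 * n := by
        have h1 : (Polynomial.X ^ (2 * n) - Φ2).natDegree ≤ 2 * n := by
          refine le_trans (Polynomial.natDegree_sub_le _ _) (max_le ?_ ?_)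
          · exact le_of_eq (Polynomial.natDegree_X_pow _)
          · exact le_of_eq hdeg
        have := Nat.lt_succ_iff.mp (Finset.mem_range.mp hj)
        omega
      by_cases hj2n : j = 2 * n
      · subst hj2n
        have hco : (Polynomial.X ^ (2 * n) - Φ2).coeff (2 * n) = 0 := by
          rw [Polynomial.coeff_sub, Polynomial.coeff_X_pow, if_pos rfl]
          have : Φ2.coeff (2 * n) = 1 := by
            rw [← hdeg]; exact hmon.coeff_natDegree
          rw [this, sub_self]
        rw [hco, map_zero, zero_mul]
      · have hlt : j < 2 * n := lt_of_le_of_ne hjle hj2n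
        have horth := D.Φ_orth (2 * n) j hlt
        rw [← hμdef, ← hΦ2def] at horth
        rw [horth, mul_zero]
    have hΦΦ : ∫ τ, (starRingEnd ℂ) (Φ2.eval τ) * Φ2.eval τ ∂μ
        = ((∫ τ, Complex.normSq (Φ2.eval τ) ∂μ : ℝ) : ℂ) := by
      rw [show (fun τ => (starRingEnd ℂ) (Φ2.eval τ) * Φ2.eval τ)
          = fun τ => ((Complex.normSq (Φ2.eval τ) : ℝ) : ℂ) from funext fun τ => by
        rw [mul_comm, Complex.mul_conj]]
      exact integral_ofReal
    rw [hsplit, hE, hΦΦ, zero_add, Complex.conj_ofReal]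
  -- moments of Rp all vanish
  have hM : ∀ j : ℕ, j ≤ 2 * n →
      ∫ τ, (starRingEnd ℂ) (τ ^ j) * Rp.eval τ ∂μ = 0 := by
    intro j hj
    have h1 : (fun τ => (starRingEnd ℂ) (τ ^ j) * Rp.eval τ)
        = fun τ => (starRingEnd ℂ) (τ ^ j) * Pp.eval τ
            - κC ^ 2 * ((starRingEnd ℂ) (τ ^ j) * Qp.eval τ) := by
      funext τ
      rw [hRpdef, Polynomial.eval_sub, Polynomial.eval_mul, Polynomial.eval_C]
      ring
    rw [h1, integral_sub (hintP j) ((hintQ j).const_mul _), integral_const_mul]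
    by_cases hj0 : j = 0
    · subst hj0
      rw [hT 0 (by omega), if_pos rfl]
      have h2 : ∫ τ, (starRingEnd ℂ) (τ ^ (0 : ℕ)) * Qp.eval τ ∂μ = ∫ τ, Qp.eval τ ∂μ := by
        congr 1
        funext τ
        rw [pow_zero, map_one, one_mul]
      rw [h2, hQint0]
      have hκ := D.κ_def (2 * n)
      rw [← hμdef, ← hΦ2def] at hκ
      have habs : ∫ τ, ‖Φ2.eval τ‖ ^ 2 ∂μ = ∫ τ, Complex.normSq (Φ2.eval τ) ∂μ := by
        congr 1
        funext τ
        exact Complex.sq_norm _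
      rw [habs] at hκ
      rw [hκCdef, show (((D.κ (2 * n) : ℝ)) : ℂ) ^ 2
            * ((∫ τ, Complex.normSq (Φ2.eval τ) ∂μ : ℝ) : ℂ)
          = (((D.κ (2 * n)) ^ 2 * ∫ τ, Complex.normSq (Φ2.eval τ) ∂μ : ℝ) : ℂ) by push_cast; ring,
        hκ]
      norm_num
    · rw [hT j hj, if_neg hj0, hV j (by omega) hj, mul_zero, sub_zero]
  -- the L² norm of Rp vanishes
  have hRR : ∫ τ, (starRingEnd ℂ) (Rp.eval τ) * Rp.eval τ ∂μ = 0 := by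
    rw [moment_expand μ Rp Rp.eval hintR]
    refine Finset.sum_eq_zero fun j hj => ?_
    have hjle : j ≤ 2 * n := by
      have := Nat.lt_succ_iff.mp (Finset.mem_range.mp hj)
      omega
    rw [hM j hjle, mul_zero]
  have hRreal : ∫ τ, Complex.normSq (Rp.eval τ) ∂μ = 0 := by
    have h1 : ∫ τ, (starRingEnd ℂ) (Rp.eval τ) * Rp.eval τ ∂μ
        = ((∫ τ, Complex.normSq (Rp.eval τ) ∂μ : ℝ) : ℂ) := by
      rw [show (fun τ => (starRingEnd ℂ) (Rp.eval τ) * Rp.eval τ)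
          = fun τ => ((Complex.normSq (Rp.eval τ) : ℝ) : ℂ) from funext fun τ => by
        rw [mul_comm, Complex.mul_conj]]
      exact integral_ofReal
    rw [hRR] at h1
    exact_mod_cast h1.symm
  have hRintSq : Integrable (fun τ => Complex.normSq (Rp.eval τ)) μ := by
    obtain ⟨mR, CR, hCR⟩ := OKc.polyeval Rp
    refine (integrable_const (CR ^ 2)).mono'
      ((Complex.continuous_normSq.measurable.comp mR).aestronglyMeasurable) ?_
    filter_upwards [hae] with τ h1
    rw [Real.norm_eq_abs, _root_.abs_of_nonneg (Complex.normSq_nonneg _), ← Complex.sq_norm]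
    exact pow_le_pow_left₀ (norm_nonneg _) (hCR τ h1) 2
  have haeR0 : ∀ᵐ τ ∂μ, Rp.eval τ = 0 := by
    have h := (integral_eq_zero_iff_of_nonneg
      (fun τ => Complex.normSq_nonneg (Rp.eval τ)) hRintSq).mp hRreal
    filter_upwards [h] with τ hτ
    exact Complex.normSq_eq_zero.mp hτ
  have hRp0 : Rp = 0 := by
    by_contra hne
    refine D.nontriv Rp.roots.toFinset ?_
    have h0 : μ {τ : ℂ | ¬ Rp.eval τ = 0} = 0 := ae_iff.mp haeR0
    refine measure_mono_null ?_ h0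
    intro τ hτ heval
    exact hτ (Multiset.mem_toFinset.mpr ((Polynomial.mem_roots hne).mpr heval))
  have hPQ : Pp = Polynomial.C (κC ^ 2) * Qp := by
    rw [hRpdef] at hRp0
    exact sub_eq_zero.mp hRp0
  -- conclusion
  rw [← evQp z hz,
    show κC ^ 2 * Qp.eval z = Pp.eval z by rw [hPQ, Polynomial.eval_mul, Polynomial.eval_C],
    evPp z hz, hSz z hz, hPz z hz, hc₁def, hc₂def]
  field_simp
end CircleHelpers
end
end

section
/- For every integer n ≥ 1 and every z ∈ ℂ \ {0}, a_n σ_n(z) = −(1/2) z^{−n} [Λ_n^{−1} b_n^{−2} i z Φ_{2n−1}(z) − (1 − β_n i) Φ*_{2n}(z)], where Λ_n = −(1/2)[a_n^{−2}(1 + β_n²) + b_n^{−2}] i and Φ*_{2n} is the reversed polynomial of Φ_{2n}. -/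
open MeasureTheory Complex Filter

noncomputable section

section basics
variable (μ : Measure ℂ) [IsProbabilityMeasure μ]

set_option linter.unusedSectionVars false in
lemma ae_circle (hc : μ {z : ℂ | ‖z‖ = 1}ᶜ = 0) : ∀ᵐ τ ∂μ, ‖τ‖ = 1 := by
  rw [ae_iff]; convert hc using 2
  rfl

lemma ae_ne_zero (hc : μ {z : ℂ | ‖z‖ = 1}ᶜ = 0) : ∀ᵐ τ ∂μ, τ ≠ 0 := by
  filter_upwards [ae_circle μ hc] with τ h
  intro h0; rw [h0] at h; simp at h

lemma ae_conj (hc : μ {z : ℂ | ‖z‖ = 1}ᶜ = 0) :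
    ∀ᵐ τ ∂μ, (starRingEnd ℂ) τ = τ⁻¹ := by
  filter_upwards [ae_circle μ hc] with τ h
  have h1 : τ * (starRingEnd ℂ) τ = 1 := by
    rw [Complex.mul_conj]; norm_cast; rw [Complex.normSq_eq_norm_sq, h]; norm_num
  exact eq_inv_of_mul_eq_one_right h1

lemma polyBound (Q : Polynomial ℂ) (τ : ℂ) (h : ‖τ‖ = 1) :
    ‖Q.eval τ‖ ≤ ∑ i ∈ Finset.range (Q.natDegree+1), ‖Q.coeff i‖ := by
  rw [Polynomial.eval_eq_sum_range]
  refine (norm_sum_le _ _).trans (Finset.sum_le_sum ?_)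
  intro i _
  rw [norm_mul, norm_pow]
  simp [h]

lemma norm_zpow_circ (j : ℤ) (τ : ℂ) (h : ‖τ‖ = 1) : ‖τ ^ j‖ = 1 := by
  rw [norm_zpow, h, one_zpow]

lemma integrable_zpow_poly (hc : μ {z : ℂ | ‖z‖ = 1}ᶜ = 0) (j : ℤ) (Q : Polynomial ℂ) :
    Integrable (fun τ => τ ^ j * Q.eval τ) μ := by
  refine Integrable.mono' (g := fun _ => ∑ i ∈ Finset.range (Q.natDegree+1), ‖Q.coeff i‖)
    (integrable_const _) ?_ ?_
  · exact ((measurable_id.pow_const j).mul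
      ((Q.continuous).measurable)).aestronglyMeasurable
  · filter_upwards [ae_circle μ hc] with τ h
    rw [norm_mul, norm_zpow_circ j τ h, one_mul]
    exact polyBound Q τ h
end basics
set_option linter.unusedSectionVars false
section jint
open Polynomial
variable (μ : Measure ℂ) [IsProbabilityMeasure μ]

def Jint (μ : Measure ℂ) (j : ℤ) (Q : Polynomial ℂ) : ℂ := ∫ τ, τ ^ j * Q.eval τ ∂μ

variable (hc : μ {z : ℂ | ‖z‖ = 1}ᶜ = 0)
include hc

lemma Jint_add (j : ℤ) (P Q : Polynomial ℂ) :
    Jint μ j (P + Q) = Jint μ j P + Jint μ j Q := by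
  unfold Jint
  simp only [Polynomial.eval_add, mul_add]
  exact integral_add (integrable_zpow_poly μ hc j P) (integrable_zpow_poly μ hc j Q)

lemma Jint_Cmul (j : ℤ) (a : ℂ) (Q : Polynomial ℂ) :
    Jint μ j (Polynomial.C a * Q) = a * Jint μ j Q := by
  unfold Jint
  simp only [Polynomial.eval_mul, Polynomial.eval_C]
  simp_rw [mul_left_comm]
  exact integral_const_mul a _

lemma Jint_sum {ι : Type*} (j : ℤ) (s : Finset ι) (f : ι → Polynomial ℂ) :
    Jint μ j (∑ k ∈ s, f k) = ∑ k ∈ s, Jint μ j (f k) := by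
  unfold Jint
  simp only [Polynomial.eval_finset_sum, Finset.mul_sum]
  exact integral_finset_sum s (fun k _ => integrable_zpow_poly μ hc j (f k))

lemma Jint_Xpow_mul (j : ℤ) (s : ℕ) (Q : Polynomial ℂ) :
    Jint μ j (Polynomial.X ^ s * Q) = Jint μ (j + s) Q := by
  unfold Jint
  refine integral_congr_ae ?_
  filter_upwards [ae_ne_zero μ hc] with τ hτ
  simp only [Polynomial.eval_mul, Polynomial.eval_pow, Polynomial.eval_X]
  rw [zpow_add₀ hτ, zpow_natCast]; ring

lemma Jint_X_mul (j : ℤ) (Q : Polynomial ℂ) :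
    Jint μ j (Polynomial.X * Q) = Jint μ (j + 1) Q := by
  have := Jint_Xpow_mul μ hc j 1 Q
  simpa using this

lemma int_conj_poly (j : ℤ) (Q : Polynomial ℂ) :
    ∫ τ, τ ^ j * (starRingEnd ℂ) (Q.eval τ) ∂μ = (starRingEnd ℂ) (Jint μ (-j) Q) := by
  rw [Jint, ← integral_conj]
  refine integral_congr_ae ?_
  filter_upwards [ae_conj μ hc, ae_ne_zero μ hc] with τ h hτ
  rw [map_mul, map_zpow₀, h, inv_zpow, ← zpow_neg, neg_neg]

lemma integrable_zpow_conj_poly (j : ℤ) (Q : Polynomial ℂ) :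
    Integrable (fun τ => τ ^ j * (starRingEnd ℂ) (Q.eval τ)) μ := by
  refine Integrable.mono' (g := fun _ => ∑ i ∈ Finset.range (Q.natDegree+1), ‖Q.coeff i‖)
    (integrable_const _) ?_ ?_
  · exact ((measurable_id.pow_const j).mul
      (Complex.continuous_conj.measurable.comp (Q.continuous).measurable)).aestronglyMeasurable
  · filter_upwards [ae_circle μ hc] with τ h
    rw [norm_mul, norm_zpow_circ j τ h, one_mul, RCLike.norm_conj]
    exact polyBound Q τ h

lemma int_conj_mul (m : ℕ) (Q : Polynomial ℂ) (hdeg : Q.natDegree ≤ m) :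
    ∫ τ, (starRingEnd ℂ) (Q.eval τ) * Q.eval τ ∂μ
      = ∑ j ∈ Finset.range (m+1), (starRingEnd ℂ) (Q.coeff j) * Jint μ (-j) Q := by
  have key : ∀ᵐ τ ∂μ, (starRingEnd ℂ) (Q.eval τ) * Q.eval τ
      = ∑ j ∈ Finset.range (m+1), (starRingEnd ℂ) (Q.coeff j) * (τ ^ (-j : ℤ) * Q.eval τ) := by
    filter_upwards [ae_conj μ hc, ae_ne_zero μ hc] with τ h hτ
    have : (starRingEnd ℂ) (Q.eval τ)
        = ∑ j ∈ Finset.range (m+1), (starRingEnd ℂ) (Q.coeff j) * τ ^ (-j : ℤ) := by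
      rw [Polynomial.eval_eq_sum_range' (Nat.lt_succ_of_le hdeg), map_sum]
      refine Finset.sum_congr rfl (fun j _ => ?_)
      rw [map_mul, map_pow, h, ← zpow_natCast, inv_zpow, ← zpow_neg]
    rw [this, Finset.sum_mul]
    refine Finset.sum_congr rfl (fun j _ => by ring)
  rw [integral_congr_ae key, integral_finset_sum]
  · exact Finset.sum_congr rfl (fun j _ => integral_const_mul _ _)
  · exact fun j _ => (integrable_zpow_poly μ hc (-j) Q).const_mul _

omit hc in
lemma int_conj_self (Q : Polynomial ℂ) :
    ∫ τ, (starRingEnd ℂ) (Q.eval τ) * Q.eval τ ∂μ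
      = ((∫ τ, Complex.normSq (Q.eval τ) ∂μ : ℝ) : ℂ) := by
  have : ∫ τ, (starRingEnd ℂ) (Q.eval τ) * Q.eval τ ∂μ
      = ∫ τ, ((Complex.normSq (Q.eval τ) : ℝ) : ℂ) ∂μ := by
    refine integral_congr_ae (Eventually.of_forall (fun τ => ?_))
    simp only []
    rw [mul_comm, Complex.mul_conj]
  rw [this]
  exact integral_ofReal
end jint
section starp
variable (μ : Measure ℂ) [IsProbabilityMeasure μ]

def starP (m : ℕ) (Q : Polynomial ℂ) : Polynomial ℂ :=
  ∑ k ∈ Finset.range (m+1), Polynomial.C ((starRingEnd ℂ) (Q.coeff k)) * Polynomial.X ^ (m - k)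

lemma starP_natDegree_le (m : ℕ) (Q : Polynomial ℂ) : (starP m Q).natDegree ≤ m := by
  refine Polynomial.natDegree_sum_le_of_forall_le _ _ (fun k hk => ?_)
  refine (Polynomial.natDegree_C_mul_le _ _).trans ?_
  rw [Polynomial.natDegree_X_pow]
  omega

lemma starP_coeff (m : ℕ) (Q : Polynomial ℂ) (i : ℕ) (hi : i ≤ m) :
    (starP m Q).coeff i = (starRingEnd ℂ) (Q.coeff (m - i)) := by
  rw [starP, Polynomial.finset_sum_coeff]
  rw [Finset.sum_eq_single (m - i)]
  · rw [Polynomial.coeff_C_mul, Polynomial.coeff_X_pow, if_pos (by omega), mul_one]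
  · intro b hb hne
    rw [Polynomial.coeff_C_mul, Polynomial.coeff_X_pow, if_neg (by
      simp only [Finset.mem_range] at hb; omega), mul_zero]
  · intro h
    exact absurd (Finset.mem_range.mpr (by omega)) h

lemma starP_eval_ae (hc : μ {z : ℂ | ‖z‖ = 1}ᶜ = 0) (m : ℕ) (Q : Polynomial ℂ)
    (hdeg : Q.natDegree ≤ m) :
    ∀ᵐ τ ∂μ, (starP m Q).eval τ = τ ^ (m : ℤ) * (starRingEnd ℂ) (Q.eval τ) := by
  filter_upwards [ae_conj μ hc, ae_ne_zero μ hc] with τ h hτ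
  rw [Polynomial.eval_eq_sum_range' (Nat.lt_succ_of_le hdeg), map_sum, Finset.mul_sum, starP,
    Polynomial.eval_finset_sum]
  refine Finset.sum_congr rfl (fun k hk => ?_)
  simp only [Finset.mem_range] at hk
  rw [Polynomial.eval_mul, Polynomial.eval_C, Polynomial.eval_pow, Polynomial.eval_X,
    map_mul, map_pow, h]
  rw [pow_sub₀ τ hτ (by omega : k ≤ m), inv_pow]
  push_cast [zpow_natCast]
  ring

lemma starP_eval_ne_zero (m : ℕ) (Q : Polynomial ℂ) (hdeg : Q.natDegree ≤ m)
    (z : ℂ) (hz : z ≠ 0) :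
    (starP m Q).eval z = z ^ m * (starRingEnd ℂ) (Q.eval ((starRingEnd ℂ) z)⁻¹) := by
  rw [Polynomial.eval_eq_sum_range' (Nat.lt_succ_of_le hdeg), map_sum, Finset.mul_sum, starP,
    Polynomial.eval_finset_sum]
  refine Finset.sum_congr rfl (fun k hk => ?_)
  simp only [Finset.mem_range] at hk
  rw [Polynomial.eval_mul, Polynomial.eval_C, Polynomial.eval_pow, Polynomial.eval_X,
    map_mul, map_pow, map_inv₀, Complex.conj_conj]
  rw [pow_sub₀ z hz (by omega : k ≤ m), inv_pow]
  ring

lemma Jint_starP (hc : μ {z : ℂ | ‖z‖ = 1}ᶜ = 0) (j : ℤ) (m : ℕ) (Q : Polynomial ℂ)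
    (hdeg : Q.natDegree ≤ m) :
    Jint μ j (starP m Q) = (starRingEnd ℂ) (Jint μ (-j - m) Q) := by
  have h1 : Jint μ j (starP m Q) = ∫ τ, τ ^ (j + m) * (starRingEnd ℂ) (Q.eval τ) ∂μ := by
    rw [Jint]
    refine integral_congr_ae ?_
    filter_upwards [starP_eval_ae μ hc m Q hdeg, ae_ne_zero μ hc] with τ h hτ
    rw [h, zpow_add₀ hτ]; ring
  rw [h1, int_conj_poly μ hc (j + m) Q]
  ring_nf

lemma Jint_sub (hc : μ {z : ℂ | ‖z‖ = 1}ᶜ = 0) (j : ℤ) (P Q : Polynomial ℂ) :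
    Jint μ j (P - Q) = Jint μ j P - Jint μ j Q := by
  unfold Jint
  simp only [Polynomial.eval_sub, mul_sub]
  exact integral_sub (integrable_zpow_poly μ hc j P) (integrable_zpow_poly μ hc j Q)

lemma integrable_normSq_poly (hc : μ {z : ℂ | ‖z‖ = 1}ᶜ = 0) (Q : Polynomial ℂ) :
    Integrable (fun τ => Complex.normSq (Q.eval τ)) μ := by
  refine Integrable.mono' (g := fun _ => (∑ i ∈ Finset.range (Q.natDegree+1), ‖Q.coeff i‖) ^ 2)
    (integrable_const _) ?_ ?_
  · exact (Complex.continuous_normSq.comp Q.continuous).measurable.aestronglyMeasurable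
  · filter_upwards [ae_circle μ hc] with τ h
    rw [Real.norm_eq_abs, _root_.abs_of_nonneg (Complex.normSq_nonneg _), Complex.normSq_eq_norm_sq]
    exact pow_le_pow_left₀ (norm_nonneg _) (polyBound Q τ h) 2

lemma poly_eq_zero_of_orth (hc : μ {z : ℂ | ‖z‖ = 1}ᶜ = 0)
    (hnt : ∀ s : Finset ℂ, μ ((s : Set ℂ))ᶜ ≠ 0) (m : ℕ) (Q : Polynomial ℂ)
    (hdeg : Q.natDegree ≤ m) (h : ∀ j : ℕ, j ≤ m → Jint μ (-j) Q = 0) : Q = 0 := by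
  have h1 : ∫ τ, (starRingEnd ℂ) (Q.eval τ) * Q.eval τ ∂μ = 0 := by
    rw [int_conj_mul μ hc m Q hdeg]
    refine Finset.sum_eq_zero (fun j hj => ?_)
    rw [h j (by simp only [Finset.mem_range] at hj; omega), mul_zero]
  have h2 : ∫ τ, Complex.normSq (Q.eval τ) ∂μ = 0 := by
    have := (int_conj_self μ Q).symm.trans h1
    exact_mod_cast this
  have h3 : ∀ᵐ τ ∂μ, Complex.normSq (Q.eval τ) = 0 := by
    have := (integral_eq_zero_iff_of_nonneg (fun τ => Complex.normSq_nonneg _)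
      (integrable_normSq_poly μ hc Q)).mp h2
    filter_upwards [this] with τ ht
    exact ht
  by_contra hQ
  refine hnt Q.roots.toFinset ?_
  have h4 : ∀ᵐ τ ∂μ, τ ∈ (Q.roots.toFinset : Set ℂ) := by
    filter_upwards [h3] with τ ht
    have : Q.eval τ = 0 := Complex.normSq_eq_zero.mp ht
    simp only [Multiset.mem_toFinset, Finset.coe_sort_coe, Set.mem_setOf_eq, Finset.mem_coe]
    rw [Polynomial.mem_roots hQ]
    exact this
  rw [ae_iff] at h4
  convert h4 using 2
  rfl

lemma shift_zero (hc : μ {z : ℂ | ‖z‖ = 1}ᶜ = 0)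
    (hnt : ∀ s : Finset ℂ, μ ((s : Set ℂ))ᶜ ≠ 0) (m : ℕ) (Q : Polynomial ℂ)
    (hdeg : Q.natDegree ≤ m + 1) (h0 : Q.coeff 0 = 0)
    (horth : ∀ j : ℕ, 1 ≤ j → j ≤ m + 1 → Jint μ (-j) Q = 0) : Q = 0 := by
  have hQ : Q = Polynomial.X * Q.divX := by
    conv_lhs => rw [← Polynomial.X_mul_divX_add Q]
    rw [h0, map_zero, add_zero]
  have hSdeg : Q.divX.natDegree ≤ m := by
    refine Polynomial.natDegree_le_iff_coeff_eq_zero.mpr (fun i hi => ?_)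
    rw [Polynomial.coeff_divX]
    exact Polynomial.coeff_eq_zero_of_natDegree_lt (by omega)
  have hSorth : ∀ i : ℕ, i ≤ m → Jint μ (-i) Q.divX = 0 := by
    intro i hi
    have := horth (i+1) (by omega) (by omega)
    rw [hQ, Jint_X_mul μ hc] at this
    convert this using 2
    push_cast; ring
  have := poly_eq_zero_of_orth μ hc hnt m Q.divX hSdeg hSorth
  rw [hQ, this, mul_zero]

lemma shift_zero' (hc : μ {z : ℂ | ‖z‖ = 1}ᶜ = 0)
    (hnt : ∀ s : Finset ℂ, μ ((s : Set ℂ))ᶜ ≠ 0) (m : ℕ) (Q : Polynomial ℂ)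
    (hdeg : Q.natDegree ≤ m + 2) (h0 : Q.coeff 0 = 0) (htop : Q.coeff (m + 2) = 0)
    (horth : ∀ j : ℕ, 1 ≤ j → j ≤ m + 1 → Jint μ (-j) Q = 0) : Q = 0 := by
  have hQ : Q = Polynomial.X * Q.divX := by
    conv_lhs => rw [← Polynomial.X_mul_divX_add Q]
    rw [h0, map_zero, add_zero]
  have hSdeg : Q.divX.natDegree ≤ m := by
    refine Polynomial.natDegree_le_iff_coeff_eq_zero.mpr (fun i hi => ?_)
    rw [Polynomial.coeff_divX]
    rcases Nat.lt_or_ge (i+1) (m+2+1) with h | h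
    · have : i + 1 = m + 2 := by omega
      rw [this]; exact htop
    · exact Polynomial.coeff_eq_zero_of_natDegree_lt (by omega)
  have hSorth : ∀ i : ℕ, i ≤ m → Jint μ (-i) Q.divX = 0 := by
    intro i hi
    have := horth (i+1) (by omega) (by omega)
    rw [hQ, Jint_X_mul μ hc] at this
    convert this using 2
    push_cast; ring
  have := poly_eq_zero_of_orth μ hc hnt m Q.divX hSdeg hSorth
  rw [hQ, this, mul_zero]
end starp
section decomp
variable (μ : Measure ℂ) [IsProbabilityMeasure μ]
variable (hc : μ {z : ℂ | ‖z‖ = 1}ᶜ = 0)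
variable (hnt : ∀ s : Finset ℂ, μ ((s : Set ℂ))ᶜ ≠ 0)
include hc

lemma Jint_starP_orth (M : ℕ) (F : Polynomial ℂ) (hFdeg : F.natDegree = M)
    (hForth : ∀ j : ℕ, j < M → Jint μ (-j) F = 0) (j : ℕ) (hj1 : 1 ≤ j) (hj2 : j ≤ M) :
    Jint μ (-j) (starP M F) = 0 := by
  rw [Jint_starP μ hc (-j) M F (le_of_eq hFdeg)]
  have : -(-(j:ℤ)) - M = -((M - j : ℕ) : ℤ) := by push_cast [Nat.cast_sub hj2]; ring
  rw [this, hForth (M - j) (by omega), map_zero]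

include hnt

lemma decomp_one (M : ℕ) (hM : 1 ≤ M) (F : Polynomial ℂ) (hFdeg : F.natDegree = M)
    (hFmonic : F.Monic) (hForth : ∀ j : ℕ, j < M → Jint μ (-j) F = 0)
    (Q : Polynomial ℂ) (hQdeg : Q.natDegree ≤ M)
    (hQorth : ∀ j : ℕ, 1 ≤ j → j ≤ M → Jint μ (-j) Q = 0) :
    Q = Polynomial.C (Q.coeff 0) * starP M F := by
  set Q' := Q - Polynomial.C (Q.coeff 0) * starP M F with hQ'
  have hs0 : (starP M F).coeff 0 = 1 := by
    rw [starP_coeff M F 0 (by omega), Nat.sub_zero, ← hFdeg, hFmonic.coeff_natDegree, map_one]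
  have h0 : Q'.coeff 0 = 0 := by
    rw [hQ', Polynomial.coeff_sub, Polynomial.coeff_C_mul, hs0, mul_one, sub_self]
  have hdeg : Q'.natDegree ≤ (M - 1) + 1 := by
    rw [hQ']
    have h1 : (Polynomial.C (Q.coeff 0) * starP M F).natDegree ≤ M :=
      (Polynomial.natDegree_C_mul_le _ _).trans (starP_natDegree_le M F)
    have := Polynomial.natDegree_sub_le Q (Polynomial.C (Q.coeff 0) * starP M F)
    omega
  have horth : ∀ j : ℕ, 1 ≤ j → j ≤ (M - 1) + 1 → Jint μ (-j) Q' = 0 := by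
    intro j hj1 hj2
    rw [hQ', Jint_sub μ hc, Jint_Cmul μ hc,
      Jint_starP_orth μ hc M F hFdeg hForth j hj1 (by omega),
      hQorth j hj1 (by omega), mul_zero, sub_zero]
  have := shift_zero μ hc hnt (M - 1) Q' hdeg h0 horth
  rw [hQ'] at this
  linear_combination (norm := ring_nf) this

lemma decomp_two (N : ℕ) (hN : 1 ≤ N)
    (F2 : Polynomial ℂ) (hF2deg : F2.natDegree = 2*N) (hF2monic : F2.Monic)
    (hF2orth : ∀ j : ℕ, j < 2*N → Jint μ (-j) F2 = 0)
    (F1 : Polynomial ℂ) (hF1deg : F1.natDegree = 2*N - 1) (hF1monic : F1.Monic)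
    (hF1orth : ∀ j : ℕ, j < 2*N - 1 → Jint μ (-j) F1 = 0)
    (Q : Polynomial ℂ) (hQdeg : Q.natDegree ≤ 2*N)
    (hQorth : ∀ j : ℕ, 1 ≤ j → j ≤ 2*N - 1 → Jint μ (-j) Q = 0) :
    Q = Polynomial.C (Q.coeff 0) * starP (2*N) F2
        + Polynomial.C (Q.coeff (2*N) - Q.coeff 0 * (starRingEnd ℂ) (F2.coeff 0))
          * (Polynomial.X * F1) := by
  set t := Q.coeff (2*N) - Q.coeff 0 * (starRingEnd ℂ) (F2.coeff 0) with ht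
  set Q' := Q - Polynomial.C (Q.coeff 0) * starP (2*N) F2 - Polynomial.C t * (Polynomial.X * F1)
    with hQ'
  have hXF1c0 : (Polynomial.X * F1).coeff 0 = 0 := by
    rw [Polynomial.mul_coeff_zero, Polynomial.coeff_X_zero, zero_mul]
  have hXF1top : (Polynomial.X * F1).coeff (2*N) = 1 := by
    have : 2*N = (2*N - 1) + 1 := by omega
    rw [this, Polynomial.coeff_X_mul, ← hF1deg, hF1monic.coeff_natDegree]
  have hs0 : (starP (2*N) F2).coeff 0 = 1 := by
    rw [starP_coeff (2*N) F2 0 (by omega), Nat.sub_zero, ← hF2deg, hF2monic.coeff_natDegree,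
      map_one]
  have hstop : (starP (2*N) F2).coeff (2*N) = (starRingEnd ℂ) (F2.coeff 0) := by
    rw [starP_coeff (2*N) F2 (2*N) le_rfl, Nat.sub_self]
  have h0 : Q'.coeff 0 = 0 := by
    simp only [hQ', Polynomial.coeff_sub, Polynomial.coeff_C_mul, hs0, hXF1c0]
    ring
  have htop : Q'.coeff ((2*N - 2) + 2) = 0 := by
    have h2 : (2*N - 2) + 2 = 2*N := by omega
    rw [h2]
    simp only [hQ', Polynomial.coeff_sub, Polynomial.coeff_C_mul, hstop, hXF1top, ht]
    ring
  have hdeg : Q'.natDegree ≤ (2*N - 2) + 2 := by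
    rw [hQ']
    have h1 : (Polynomial.C (Q.coeff 0) * starP (2*N) F2).natDegree ≤ 2*N :=
      (Polynomial.natDegree_C_mul_le _ _).trans (starP_natDegree_le (2*N) F2)
    have h2 : (Polynomial.C t * (Polynomial.X * F1)).natDegree ≤ 2*N := by
      refine (Polynomial.natDegree_C_mul_le _ _).trans ?_
      refine (Polynomial.natDegree_mul_le).trans ?_
      rw [Polynomial.natDegree_X, hF1deg]
      omega
    have h3 := Polynomial.natDegree_sub_le Q (Polynomial.C (Q.coeff 0) * starP (2*N) F2)
    have h4 := Polynomial.natDegree_sub_le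
      (Q - Polynomial.C (Q.coeff 0) * starP (2*N) F2) (Polynomial.C t * (Polynomial.X * F1))
    omega
  have horth : ∀ j : ℕ, 1 ≤ j → j ≤ (2*N - 2) + 1 → Jint μ (-j) Q' = 0 := by
    intro j hj1 hj2
    have hXF1orth : Jint μ (-j) (Polynomial.X * F1) = 0 := by
      rw [Jint_X_mul μ hc]
      have : -(j:ℤ) + 1 = -((j - 1 : ℕ) : ℤ) := by push_cast [Nat.cast_sub hj1]; ring
      rw [this, hF1orth (j-1) (by omega)]
    rw [hQ', Jint_sub μ hc, Jint_sub μ hc, Jint_Cmul μ hc, Jint_Cmul μ hc,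
      Jint_starP_orth μ hc (2*N) F2 hF2deg hF2orth j hj1 (by omega),
      hQorth j hj1 (by omega), hXF1orth]
    ring
  have := shift_zero' μ hc hnt (2*N - 2) Q' hdeg h0 htop horth
  rw [hQ'] at this
  linear_combination (norm := ring_nf) this
end decomp
section trig
variable (μ : Measure ℂ) [IsProbabilityMeasure μ]

def pcosP (k : ℕ) : Polynomial ℂ := Polynomial.C (1/2 : ℂ) * (Polynomial.X ^ (2*k) + 1)
def psinP (k : ℕ) : Polynomial ℂ := Polynomial.C ((2*I)⁻¹) * (Polynomial.X ^ (2*k) - 1)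

lemma pcosP_natDegree_le (k : ℕ) : (pcosP k).natDegree ≤ 2*k := by
  refine (Polynomial.natDegree_C_mul_le _ _).trans ?_
  refine (Polynomial.natDegree_add_le _ _).trans ?_
  simp [Polynomial.natDegree_X_pow]

lemma psinP_natDegree_le (k : ℕ) : (psinP k).natDegree ≤ 2*k := by
  refine (Polynomial.natDegree_C_mul_le _ _).trans ?_
  refine (Polynomial.natDegree_sub_le _ _).trans ?_
  simp [Polynomial.natDegree_X_pow]

lemma pcosP_coeff_zero (k : ℕ) (hk : 1 ≤ k) : (pcosP k).coeff 0 = 1/2 := by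
  rw [pcosP, Polynomial.coeff_C_mul, Polynomial.coeff_add, Polynomial.coeff_X_pow,
    if_neg (by omega), Polynomial.coeff_one, if_pos rfl]
  norm_num

lemma pcosP_coeff_top (k : ℕ) (hk : 1 ≤ k) : (pcosP k).coeff (2*k) = 1/2 := by
  rw [pcosP, Polynomial.coeff_C_mul, Polynomial.coeff_add, Polynomial.coeff_X_pow,
    if_pos rfl, Polynomial.coeff_one, if_neg (by omega)]
  norm_num

lemma psinP_coeff_zero (k : ℕ) (hk : 1 ≤ k) : (psinP k).coeff 0 = -(2*I)⁻¹ := by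
  rw [psinP, Polynomial.coeff_C_mul, Polynomial.coeff_sub, Polynomial.coeff_X_pow,
    if_neg (by omega), Polynomial.coeff_one, if_pos rfl]
  ring

lemma psinP_coeff_top (k : ℕ) (hk : 1 ≤ k) : (psinP k).coeff (2*k) = (2*I)⁻¹ := by
  rw [psinP, Polynomial.coeff_C_mul, Polynomial.coeff_sub, Polynomial.coeff_X_pow,
    if_pos rfl, Polynomial.coeff_one, if_neg (by omega)]
  ring

lemma rep_cos (k : ℕ) (τ : ℂ) (hτ : τ ≠ 0) :
    cosL k τ = τ ^ (-(k:ℤ)) * (pcosP k).eval τ := by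
  have hpow : τ ^ k ≠ 0 := pow_ne_zero k hτ
  rw [cosL, pcosP, zpow_neg, zpow_natCast]
  simp only [Polynomial.eval_mul, Polynomial.eval_C, Polynomial.eval_add, Polynomial.eval_pow,
    Polynomial.eval_X, Polynomial.eval_one]
  field_simp
  ring_nf

lemma rep_sin (k : ℕ) (τ : ℂ) (hτ : τ ≠ 0) :
    sinL k τ = τ ^ (-(k:ℤ)) * (psinP k).eval τ := by
  have hpow : τ ^ k ≠ 0 := pow_ne_zero k hτ
  have h2I : (2*I : ℂ) ≠ 0 := by simp [I_ne_zero]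
  rw [sinL, psinP, zpow_neg, zpow_natCast]
  simp only [Polynomial.eval_mul, Polynomial.eval_C, Polynomial.eval_sub, Polynomial.eval_pow,
    Polynomial.eval_X, Polynomial.eval_one]
  field_simp
  ring_nf

lemma int_pair (hc : μ {z : ℂ | ‖z‖ = 1}ᶜ = 0) (f g : ℂ → ℂ) (j k : ℤ)
    (W V : Polynomial ℂ)
    (hf : ∀ᵐ τ ∂μ, f τ = τ ^ j * W.eval τ) (hg : ∀ᵐ τ ∂μ, g τ = τ ^ k * V.eval τ) :
    innR μ f g = Jint μ (j + k) (W * V) := by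
  unfold innR Jint
  refine integral_congr_ae ?_
  filter_upwards [hf, hg, ae_ne_zero μ hc] with τ h1 h2 hτ
  rw [h1, h2, zpow_add₀ hτ, Polynomial.eval_mul]
  ring
end trig
section trig2
variable (μ : Measure ℂ) [IsProbabilityMeasure μ]
variable (hc : μ {z : ℂ | ‖z‖ = 1}ᶜ = 0)
include hc

lemma Jint_mul_pcos (j : ℤ) (k : ℕ) (W : Polynomial ℂ) :
    Jint μ j (W * pcosP k) = (1/2) * (Jint μ (j + ((2*k:ℕ):ℤ)) W + Jint μ j W) := by
  have hW : W * pcosP k = Polynomial.C (1/2:ℂ) * (Polynomial.X^(2*k) * W + W) := by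
    rw [pcosP]; ring
  rw [hW, Jint_Cmul μ hc, Jint_add μ hc, Jint_Xpow_mul μ hc]

lemma Jint_mul_psin (j : ℤ) (k : ℕ) (W : Polynomial ℂ) :
    Jint μ j (W * psinP k) = (2*I)⁻¹ * (Jint μ (j + ((2*k:ℕ):ℤ)) W - Jint μ j W) := by
  have hW : W * psinP k = Polynomial.C ((2*I)⁻¹:ℂ) * (Polynomial.X^(2*k) * W - W) := by
    rw [psinP]; ring
  rw [hW, Jint_Cmul μ hc, Jint_sub μ hc, Jint_Xpow_mul μ hc]

omit hc in
lemma rep_span (n : ℕ) (cc dd : ℕ → ℝ) (τ : ℂ) (hτ : τ ≠ 0) :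
    ∑ k ∈ Finset.range n, ((cc k : ℂ) * cosL k τ + (dd k : ℂ) * sinL k τ)
      = τ ^ (-(n:ℤ)) * (∑ k ∈ Finset.range n, Polynomial.X^(n-k) *
          (Polynomial.C ((cc k : ℂ)) * pcosP k + Polynomial.C ((dd k : ℂ)) * psinP k)).eval τ := by
  rw [Polynomial.eval_finset_sum, Finset.mul_sum]
  refine Finset.sum_congr rfl (fun k hk => ?_)
  have hk' : k < n := Finset.mem_range.mp hk
  have hx : τ ^ (-(n:ℤ)) * τ ^ ((n-k:ℕ)) = τ ^ (-(k:ℤ)) := by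
    rw [← zpow_natCast τ (n-k), ← zpow_add₀ hτ]
    congr 1
    omega
  simp only [Polynomial.eval_mul, Polynomial.eval_pow, Polynomial.eval_X, Polynomial.eval_add,
    Polynomial.eval_C]
  rw [← mul_assoc, hx, rep_cos k τ hτ, rep_sin k τ hτ]
  ring

lemma Jint_norm_split (n : ℕ) (W : Polynomial ℂ) (cc dd : ℕ → ℝ)
    (hpair : ∀ k : ℕ, k < n → Jint μ ((k:ℤ) - n) W = 0 ∧ Jint μ (-(n:ℤ) - k) W = 0) :
    Jint μ (-((2*n:ℕ):ℤ)) (W * (∑ k ∈ Finset.range n, Polynomial.X^(n-k) *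
      (Polynomial.C ((cc k : ℂ)) * pcosP k + Polynomial.C ((dd k : ℂ)) * psinP k))) = 0 := by
  rw [Finset.mul_sum, Jint_sum μ hc]
  refine Finset.sum_eq_zero (fun k hk => ?_)
  have hk' : k < n := Finset.mem_range.mp hk
  have hre : W * (Polynomial.X^(n-k) * (Polynomial.C ((cc k : ℂ)) * pcosP k
      + Polynomial.C ((dd k : ℂ)) * psinP k))
      = Polynomial.X^(n-k) * (Polynomial.C ((cc k : ℂ)) * (W * pcosP k)
        + Polynomial.C ((dd k : ℂ)) * (W * psinP k)) := by ring
  rw [hre, Jint_Xpow_mul μ hc, Jint_add μ hc, Jint_Cmul μ hc, Jint_Cmul μ hc,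
    Jint_mul_pcos μ hc, Jint_mul_psin μ hc]
  have e1 : (-((2*n:ℕ):ℤ) + ((n-k:ℕ):ℤ)) + ((2*k:ℕ):ℤ) = (k:ℤ) - n := by
    push_cast [Nat.cast_sub (le_of_lt hk')]; ring
  have e2 : (-((2*n:ℕ):ℤ) + ((n-k:ℕ):ℤ)) = -(n:ℤ) - k := by
    push_cast [Nat.cast_sub (le_of_lt hk')]; ring
  rw [e1, e2, (hpair k hk').1, (hpair k hk').2]
  ring

omit hc in
lemma span_sum_deg (n : ℕ) (hn : 1 ≤ n) (cc dd : ℕ → ℝ) :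
    (∑ k ∈ Finset.range n, Polynomial.X^(n-k) *
      (Polynomial.C ((cc k : ℂ)) * pcosP k + Polynomial.C ((dd k : ℂ)) * psinP k)).natDegree
      ≤ 2*n - 1 := by
  refine Polynomial.natDegree_sum_le_of_forall_le _ _ (fun k hk => ?_)
  have hk' : k < n := Finset.mem_range.mp hk
  refine Polynomial.natDegree_mul_le.trans ?_
  have h1 : (Polynomial.C ((cc k : ℂ)) * pcosP k
      + Polynomial.C ((dd k : ℂ)) * psinP k).natDegree ≤ 2*k := by
    refine (Polynomial.natDegree_add_le _ _).trans ?_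
    refine max_le ((Polynomial.natDegree_C_mul_le _ _).trans (pcosP_natDegree_le k))
      ((Polynomial.natDegree_C_mul_le _ _).trans (psinP_natDegree_le k))
  rw [Polynomial.natDegree_X_pow]
  omega

omit hc in
lemma span_sum_coeff0 (n : ℕ) (cc dd : ℕ → ℝ) :
    (∑ k ∈ Finset.range n, Polynomial.X^(n-k) *
      (Polynomial.C ((cc k : ℂ)) * pcosP k + Polynomial.C ((dd k : ℂ)) * psinP k)).coeff 0
      = 0 := by
  rw [Polynomial.finset_sum_coeff]
  refine Finset.sum_eq_zero (fun k hk => ?_)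
  have hk' : k < n := Finset.mem_range.mp hk
  rw [Polynomial.mul_coeff_zero, Polynomial.coeff_X_pow, if_neg (by omega), zero_mul]
end trig2
section opuc
instance (D : OTP) : IsProbabilityMeasure D.μ := D.prob

variable (D : OPUC)

lemma Phi_orth' (m j : ℕ) (hj : j < m) : Jint D.μ (-(j:ℤ)) (D.Φ m) = 0 := by
  rw [Jint, ← D.Φ_orth m j hj]
  refine integral_congr_ae ?_
  filter_upwards [ae_conj D.μ D.circ] with τ h
  rw [map_pow, h, inv_pow, ← zpow_natCast τ j, ← zpow_neg]

def mval (m : ℕ) : ℝ := ∫ τ, ‖(D.Φ m).eval τ‖ ^ 2 ∂D.μ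

lemma mval_pos (m : ℕ) : 0 < mval D m := by
  have h := D.κ_def m
  have hp := D.κ_pos m
  rw [mval]
  nlinarith [sq_nonneg (D.κ m), mul_pos hp hp]

lemma Jint_mval (m : ℕ) : Jint D.μ (-(m:ℤ)) (D.Φ m) = ((mval D m : ℝ) : ℂ) := by
  have hdeg : (D.Φ m).natDegree ≤ m := le_of_eq (D.Φ_deg m)
  have h1 := int_conj_mul D.μ D.circ m (D.Φ m) hdeg
  have h2 := int_conj_self D.μ (D.Φ m)
  rw [Finset.sum_range_succ] at h1
  have hz : ∑ j ∈ Finset.range m,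
      (starRingEnd ℂ) ((D.Φ m).coeff j) * Jint D.μ (-(j:ℤ)) (D.Φ m) = 0 :=
    Finset.sum_eq_zero (fun j hj => by
      rw [Phi_orth' D m j (Finset.mem_range.mp hj), mul_zero])
  rw [hz, zero_add] at h1
  have hm : (D.Φ m).coeff m = 1 := by
    have := (D.Φ_monic m).coeff_natDegree
    rwa [D.Φ_deg m] at this
  rw [hm, map_one, one_mul] at h1
  rw [← h1, h2, mval]
  norm_cast
  refine integral_congr_ae (Eventually.of_forall (fun τ => ?_))
  simp only []
  rw [Complex.sq_norm]
end opuc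
/-- `Λ_n = -(1/2) * (a n ^ (-2) * (1 + β n ^ 2) + b n ^ (-2)) * i`. -/
def Lam (D : OTP) (n : ℕ) : ℂ :=
  -(1 / 2) * ((((D.a n : ℂ)) ^ 2)⁻¹ * (1 + (D.β n : ℂ) ^ 2) + (((D.b n : ℂ)) ^ 2)⁻¹) * I
/-- For `n ≥ 1` and `z ≠ 0`,
`a_n σ_n(z) = -(1/2) z^(-n) [Λ_n⁻¹ b_n^(-2) i z Φ_{2n-1}(z) - (1 - β_n i) Φ*_{2n}(z)]`. -/
theorem sigma_from_OPUC (D : OPUC) (n : ℕ) (hn : 1 ≤ n) (z : ℂ) (hz : z ≠ 0) :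
    (D.a n : ℂ) * D.sig n z =
      -(1 / 2) * (z ^ n)⁻¹ *
        ((Lam D.toOTP n)⁻¹ * (((D.b n : ℂ)) ^ 2)⁻¹ * I * z * (D.Φ (2 * n - 1)).eval z
          - (1 - (D.β n : ℂ) * I) * revP (2 * n) (D.Φ (2 * n)) z) := by
  have hprob : IsProbabilityMeasure D.μ := D.prob
  have hc := D.circ
  have hnt := D.nontriv
  have h2I : (2*I : ℂ) ≠ 0 := by simp [I_ne_zero]
  have hbne : (D.b n : ℂ) ≠ 0 := Complex.ofReal_ne_zero.mpr (ne_of_gt (D.hb n))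
  have hane : (D.a n : ℂ) ≠ 0 := Complex.ofReal_ne_zero.mpr (ne_of_gt (D.ha n))
  have hb2ne : ((D.b n : ℂ))^2 ≠ 0 := pow_ne_zero 2 hbne
  have ha2ne : ((D.a n : ℂ))^2 ≠ 0 := pow_ne_zero 2 hane
  have hΦ1deg : (D.Φ (2*n-1)).natDegree = 2*n-1 := D.Φ_deg _
  have hΦ2deg : (D.Φ (2*n)).natDegree = 2*n := D.Φ_deg _
  have hF1orth : ∀ j : ℕ, j < 2*n-1 → Jint D.μ (-(j:ℤ)) (D.Φ (2*n-1)) = 0 :=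
    fun j hj => Phi_orth' D _ j hj
  have hF2orth : ∀ j : ℕ, j < 2*n → Jint D.μ (-(j:ℤ)) (D.Φ (2*n)) = 0 :=
    fun j hj => Phi_orth' D _ j hj
  set c0 : ℂ := (D.Φ (2*n)).coeff 0 with hc0def
  set cb : ℂ := (starRingEnd ℂ) c0 with hcbdef
  set M1 : ℂ := ((mval D (2*n-1) : ℝ) : ℂ) with hM1def
  set M2 : ℂ := ((mval D (2*n) : ℝ) : ℂ) with hM2def
  have hM1 : Jint D.μ (-((2*n-1:ℕ):ℤ)) (D.Φ (2*n-1)) = M1 := Jint_mval D _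
  have hM2 : Jint D.μ (-((2*n:ℕ):ℤ)) (D.Φ (2*n)) = M2 := Jint_mval D _
  have hM1ne : M1 ≠ 0 := by
    rw [hM1def]; exact Complex.ofReal_ne_zero.mpr (ne_of_gt (mval_pos D _))
  have hM1conj : (starRingEnd ℂ) M1 = M1 := Complex.conj_ofReal _
  have hM2conj : (starRingEnd ℂ) M2 = M2 := Complex.conj_ofReal _
  -- Szegő recursion
  have hΦ1top : (D.Φ (2*n-1)).coeff (2*n-1) = 1 := by
    have := (D.Φ_monic (2*n-1)).coeff_natDegree; rwa [hΦ1deg] at this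
  have hΦ2top : (D.Φ (2*n)).coeff (2*n) = 1 := by
    have := (D.Φ_monic (2*n)).coeff_natDegree; rwa [hΦ2deg] at this
  have hXc0 : (Polynomial.X * D.Φ (2*n-1) - D.Φ (2*n)).coeff 0 = -c0 := by
    rw [Polynomial.coeff_sub, Polynomial.mul_coeff_zero, Polynomial.coeff_X_zero, zero_mul,
      zero_sub, hc0def]
  have hXtop : (Polynomial.X * D.Φ (2*n-1)).coeff (2*n) = 1 := by
    have h2 : 2*n = (2*n-1) + 1 := by omega
    rw [h2, Polynomial.coeff_X_mul]
    simpa using hΦ1top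
  have hXdeg : (Polynomial.X * D.Φ (2*n-1)).natDegree ≤ 2*n := by
    refine Polynomial.natDegree_mul_le.trans ?_
    rw [Polynomial.natDegree_X, hΦ1deg]; omega
  have hSzdeg : (Polynomial.X * D.Φ (2*n-1) - D.Φ (2*n)).natDegree ≤ 2*n-1 := by
    refine Polynomial.natDegree_le_iff_coeff_eq_zero.mpr (fun i hi => ?_)
    rw [Polynomial.coeff_sub]
    rcases eq_or_lt_of_le (show 2*n ≤ i by omega) with h | h
    · rw [← h, hXtop, hΦ2top, sub_self]
    · rw [Polynomial.coeff_eq_zero_of_natDegree_lt (lt_of_le_of_lt hXdeg h),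
        Polynomial.coeff_eq_zero_of_natDegree_lt (by omega), sub_self]
  have hSzorth : ∀ j : ℕ, 1 ≤ j → j ≤ 2*n-1 →
      Jint D.μ (-(j:ℤ)) (Polynomial.X * D.Φ (2*n-1) - D.Φ (2*n)) = 0 := by
    intro j h1 h2
    rw [Jint_sub D.μ hc, Jint_X_mul D.μ hc]
    have e1 : (-(j:ℤ)) + 1 = -((j-1:ℕ):ℤ) := by omega
    rw [e1, hF1orth (j-1) (by omega), hF2orth j (by omega), sub_self]
  have hSz := decomp_one D.μ hc hnt (2*n-1) (by omega) (D.Φ (2*n-1)) hΦ1deg (D.Φ_monic _)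
    hF1orth _ hSzdeg hSzorth
  rw [hXc0] at hSz
  have hstar1 : ∀ j : ℤ, Jint D.μ j (starP (2*n-1) (D.Φ (2*n-1)))
      = (starRingEnd ℂ) (Jint D.μ (-j - ((2*n-1:ℕ):ℤ)) (D.Φ (2*n-1))) :=
    fun j => Jint_starP D.μ hc j _ _ (le_of_eq hΦ1deg)
  have hu : Jint D.μ 1 (D.Φ (2*n-1)) = -c0 * M1 := by
    have h := congrArg (fun P => Jint D.μ 0 P) hSz
    rw [Jint_sub D.μ hc, Jint_X_mul D.μ hc, Jint_Cmul D.μ hc, hstar1 0] at h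
    have h00 := hF2orth 0 (by omega)
    norm_num at h00 h
    rw [h00, sub_zero] at h
    rw [hM1, hM1conj] at h
    linear_combination h
  have hM2eq : M2 = M1 * (1 - c0*cb) := by
    have h := congrArg (fun P => Jint D.μ (-((2*n:ℕ):ℤ)) P) hSz
    rw [Jint_sub D.μ hc, Jint_X_mul D.μ hc, Jint_Cmul D.μ hc, hstar1 _, hM2] at h
    have e1 : (-((2*n:ℕ):ℤ)) + 1 = -((2*n-1:ℕ):ℤ) := by omega
    have e2 : (-(-((2*n:ℕ):ℤ)) - ((2*n-1:ℕ):ℤ)) = 1 := by omega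
    rw [e1, e2, hM1, hu, map_mul, map_neg, hM1conj, ← hcbdef] at h
    linear_combination -h
  -- spans
  obtain ⟨cB, dB, hspanB⟩ := D.pii_span n hn
  obtain ⟨cA, dA, e, hspanA⟩ := D.sig_span n hn
  set PB : Polynomial ℂ := psinP n + ∑ k ∈ Finset.range n, Polynomial.X^(n-k) *
    (Polynomial.C ((cB k : ℂ)) * pcosP k + Polynomial.C ((dB k : ℂ)) * psinP k) with hPBdef
  set PA : Polynomial ℂ := pcosP n + Polynomial.C ((e : ℂ)) * psinP n
    + ∑ k ∈ Finset.range n, Polynomial.X^(n-k) *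
      (Polynomial.C ((cA k : ℂ)) * pcosP k + Polynomial.C ((dA k : ℂ)) * psinP k) with hPAdef
  have hrepB : ∀ τ : ℂ, τ ≠ 0 → (D.b n : ℂ) * D.pii n τ = τ ^ (-(n:ℤ)) * PB.eval τ := by
    intro τ hτ
    rw [hspanB τ hτ, hPBdef, Polynomial.eval_add, mul_add, rep_sin n τ hτ,
      rep_span n cB dB τ hτ]
  have hrepA : ∀ τ : ℂ, τ ≠ 0 → (D.a n : ℂ) * D.sig n τ = τ ^ (-(n:ℤ)) * PA.eval τ := by
    intro τ hτ
    rw [hspanA τ hτ, hPAdef, Polynomial.eval_add, Polynomial.eval_add, mul_add, mul_add,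
      rep_cos n τ hτ, rep_span n cA dA τ hτ, Polynomial.eval_mul, Polynomial.eval_C,
      rep_sin n τ hτ]
    ring
  have hrepBae : ∀ᵐ τ ∂D.μ, (D.b n : ℂ) * D.pii n τ = τ ^ (-(n:ℤ)) * PB.eval τ := by
    filter_upwards [ae_ne_zero D.μ hc] with τ hτ using hrepB τ hτ
  have hrepAae : ∀ᵐ τ ∂D.μ, (D.a n : ℂ) * D.sig n τ = τ ^ (-(n:ℤ)) * PA.eval τ := by
    filter_upwards [ae_ne_zero D.μ hc] with τ hτ using hrepA τ hτ
  have hcosae : ∀ k : ℕ, ∀ᵐ τ ∂D.μ, cosL k τ = τ ^ (-(k:ℤ)) * (pcosP k).eval τ := fun k => by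
    filter_upwards [ae_ne_zero D.μ hc] with τ hτ using rep_cos k τ hτ
  have hsinae : ∀ k : ℕ, ∀ᵐ τ ∂D.μ, sinL k τ = τ ^ (-(k:ℤ)) * (psinP k).eval τ := fun k => by
    filter_upwards [ae_ne_zero D.μ hc] with τ hτ using rep_sin k τ hτ
  -- orthogonality pairs
  have pair_of : ∀ (W : Polynomial ℂ) (k : ℕ),
      innR D.μ (fun τ => (D.b n : ℂ) * D.pii n τ) (cosL k) = 0 → True := fun _ _ _ => trivial
  have hBpair : ∀ k : ℕ, k < n →
      Jint D.μ ((k:ℤ) - n) PB = 0 ∧ Jint D.μ (-(n:ℤ) - k) PB = 0 := by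
    intro k hk
    obtain ⟨hcos, hsin⟩ := D.pii_orth n hn k hk
    rw [int_pair D.μ hc _ _ (-(n:ℤ)) (-(k:ℤ)) PB (pcosP k) hrepBae (hcosae k),
      Jint_mul_pcos D.μ hc _ k PB] at hcos
    rw [int_pair D.μ hc _ _ (-(n:ℤ)) (-(k:ℤ)) PB (psinP k) hrepBae (hsinae k),
      Jint_mul_psin D.μ hc _ k PB] at hsin
    have e1 : (-(n:ℤ) + -(k:ℤ)) + ((2*k:ℕ):ℤ) = (k:ℤ) - n := by push_cast; ring
    have e2 : (-(n:ℤ) + -(k:ℤ)) = -(n:ℤ) - k := by ring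
    rw [e1, e2] at hcos hsin
    have h1 : Jint D.μ ((k:ℤ)-n) PB + Jint D.μ (-(n:ℤ)-k) PB = 0 := by
      rcases mul_eq_zero.mp hcos with h | h
      · norm_num at h
      · exact h
    have h2 : Jint D.μ ((k:ℤ)-n) PB - Jint D.μ (-(n:ℤ)-k) PB = 0 := by
      rcases mul_eq_zero.mp hsin with h | h
      · exact absurd h (inv_ne_zero h2I)
      · exact h
    constructor
    · linear_combination (1/2)*h1 + (1/2)*h2
    · linear_combination (1/2)*h1 - (1/2)*h2
  obtain ⟨hApairs0, hAsin0⟩ := D.sig_orth n hn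
  have hApair : ∀ k : ℕ, k < n →
      Jint D.μ ((k:ℤ) - n) PA = 0 ∧ Jint D.μ (-(n:ℤ) - k) PA = 0 := by
    intro k hk
    obtain ⟨hcos, hsin⟩ := hApairs0 k hk
    rw [int_pair D.μ hc _ _ (-(n:ℤ)) (-(k:ℤ)) PA (pcosP k) hrepAae (hcosae k),
      Jint_mul_pcos D.μ hc _ k PA] at hcos
    rw [int_pair D.μ hc _ _ (-(n:ℤ)) (-(k:ℤ)) PA (psinP k) hrepAae (hsinae k),
      Jint_mul_psin D.μ hc _ k PA] at hsin
    have e1 : (-(n:ℤ) + -(k:ℤ)) + ((2*k:ℕ):ℤ) = (k:ℤ) - n := by push_cast; ring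
    have e2 : (-(n:ℤ) + -(k:ℤ)) = -(n:ℤ) - k := by ring
    rw [e1, e2] at hcos hsin
    have h1 : Jint D.μ ((k:ℤ)-n) PA + Jint D.μ (-(n:ℤ)-k) PA = 0 := by
      rcases mul_eq_zero.mp hcos with h | h
      · norm_num at h
      · exact h
    have h2 : Jint D.μ ((k:ℤ)-n) PA - Jint D.μ (-(n:ℤ)-k) PA = 0 := by
      rcases mul_eq_zero.mp hsin with h | h
      · exact absurd h (inv_ne_zero h2I)
      · exact h
    constructor
    · linear_combination (1/2)*h1 + (1/2)*h2
    · linear_combination (1/2)*h1 - (1/2)*h2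
  have hAsin : Jint D.μ 0 PA = Jint D.μ (-((2*n:ℕ):ℤ)) PA := by
    rw [int_pair D.μ hc _ _ (-(n:ℤ)) (-(n:ℤ)) PA (psinP n) hrepAae (hsinae n),
      Jint_mul_psin D.μ hc _ n PA] at hAsin0
    have e1 : (-(n:ℤ) + -(n:ℤ)) + ((2*n:ℕ):ℤ) = 0 := by push_cast; ring
    have e2 : (-(n:ℤ) + -(n:ℤ)) = -((2*n:ℕ):ℤ) := by push_cast; ring
    rw [e1, e2] at hAsin0
    rcases mul_eq_zero.mp hAsin0 with h | h
    · exact absurd h (inv_ne_zero h2I)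
    · exact sub_eq_zero.mp h
  have hBorth : ∀ j : ℕ, 1 ≤ j → j ≤ 2*n-1 → Jint D.μ (-(j:ℤ)) PB = 0 := by
    intro j h1 h2
    rcases le_or_gt j n with h | h
    · have hp := (hBpair (n-j) (by omega)).1
      have e : ((n-j:ℕ):ℤ) - n = -(j:ℤ) := by omega
      rwa [e] at hp
    · have hp := (hBpair (j-n) (by omega)).2
      have e : -(n:ℤ) - ((j-n:ℕ):ℤ) = -(j:ℤ) := by omega
      rwa [e] at hp
  have hAorth : ∀ j : ℕ, 1 ≤ j → j ≤ 2*n-1 → Jint D.μ (-(j:ℤ)) PA = 0 := by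
    intro j h1 h2
    rcases le_or_gt j n with h | h
    · have hp := (hApair (n-j) (by omega)).1
      have e : ((n-j:ℕ):ℤ) - n = -(j:ℤ) := by omega
      rwa [e] at hp
    · have hp := (hApair (j-n) (by omega)).2
      have e : -(n:ℤ) - ((j-n:ℕ):ℤ) = -(j:ℤ) := by omega
      rwa [e] at hp
  -- coefficients of PB, PA
  have hPB0 : PB.coeff 0 = -(2*I)⁻¹ := by
    rw [hPBdef, Polynomial.coeff_add, psinP_coeff_zero n hn, span_sum_coeff0 n cB dB, add_zero]
  have hsumdegB := span_sum_deg n hn cB dB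
  have hsumdegA := span_sum_deg n hn cA dA
  have hPBtop : PB.coeff (2*n) = (2*I)⁻¹ := by
    rw [hPBdef, Polynomial.coeff_add, psinP_coeff_top n hn,
      Polynomial.coeff_eq_zero_of_natDegree_lt (lt_of_le_of_lt hsumdegB (by omega)), add_zero]
  have hPBdeg : PB.natDegree ≤ 2*n := by
    rw [hPBdef]
    refine (Polynomial.natDegree_add_le _ _).trans ?_
    refine max_le (psinP_natDegree_le n) (hsumdegB.trans (by omega))
  have hPA0 : PA.coeff 0 = 1/2 - (e:ℂ) * (2*I)⁻¹ := by
    rw [hPAdef, Polynomial.coeff_add, Polynomial.coeff_add, pcosP_coeff_zero n hn,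
      Polynomial.coeff_C_mul, psinP_coeff_zero n hn, span_sum_coeff0 n cA dA, add_zero]
    ring
  have hPAtop : PA.coeff (2*n) = 1/2 + (e:ℂ) * (2*I)⁻¹ := by
    rw [hPAdef, Polynomial.coeff_add, Polynomial.coeff_add, pcosP_coeff_top n hn,
      Polynomial.coeff_C_mul, psinP_coeff_top n hn,
      Polynomial.coeff_eq_zero_of_natDegree_lt (lt_of_le_of_lt hsumdegA (by omega)), add_zero]
  have hPAdeg : PA.natDegree ≤ 2*n := by
    rw [hPAdef]
    refine (Polynomial.natDegree_add_le _ _).trans ?_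
    refine max_le ((Polynomial.natDegree_add_le _ _).trans (max_le (pcosP_natDegree_le n)
      ((Polynomial.natDegree_C_mul_le _ _).trans (psinP_natDegree_le n))))
      (hsumdegA.trans (by omega))
  have hPAcoeffsum : PA.coeff 0 + PA.coeff (2*n) = 1 := by
    rw [hPA0, hPAtop]; ring
  -- decompositions
  have hdecB := decomp_two D.μ hc hnt n hn (D.Φ (2*n)) hΦ2deg (D.Φ_monic _) hF2orth
    (D.Φ (2*n-1)) hΦ1deg (D.Φ_monic _) hF1orth PB hPBdeg hBorth
  have hdecA := decomp_two D.μ hc hnt n hn (D.Φ (2*n)) hΦ2deg (D.Φ_monic _) hF2orth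
    (D.Φ (2*n-1)) hΦ1deg (D.Φ_monic _) hF1orth PA hPAdeg hAorth
  rw [← hc0def, ← hcbdef] at hdecB hdecA
  set gA : ℂ := PA.coeff 0 with hgAdef
  set tA : ℂ := PA.coeff (2*n) - PA.coeff 0 * cb with htAdef
  -- J-values of building blocks
  have hstar2 : ∀ j : ℤ, Jint D.μ j (starP (2*n) (D.Φ (2*n)))
      = (starRingEnd ℂ) (Jint D.μ (-j - ((2*n:ℕ):ℤ)) (D.Φ (2*n))) :=
    fun j => Jint_starP D.μ hc j _ _ (le_of_eq hΦ2deg)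
  have hS0 : Jint D.μ 0 (starP (2*n) (D.Φ (2*n))) = M2 := by
    rw [hstar2 0]
    have e1 : (-(0:ℤ) - ((2*n:ℕ):ℤ)) = -((2*n:ℕ):ℤ) := by ring
    rw [e1, hM2, hM2conj]
  have hS2 : Jint D.μ (-((2*n:ℕ):ℤ)) (starP (2*n) (D.Φ (2*n))) = 0 := by
    rw [hstar2 _]
    have e1 : (-(-((2*n:ℕ):ℤ)) - ((2*n:ℕ):ℤ)) = -((0:ℕ):ℤ) := by push_cast; ring
    rw [e1, hF2orth 0 (by omega), map_zero]
  have hX0 : Jint D.μ 0 (Polynomial.X * D.Φ (2*n-1)) = -c0 * M1 := by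
    rw [Jint_X_mul D.μ hc, zero_add, hu]
  have hX2 : Jint D.μ (-((2*n:ℕ):ℤ)) (Polynomial.X * D.Φ (2*n-1)) = M1 := by
    rw [Jint_X_mul D.μ hc]
    have e1 : (-((2*n:ℕ):ℤ)) + 1 = -((2*n-1:ℕ):ℤ) := by omega
    rw [e1, hM1]
  -- J-values of PB and PA
  have hJB : ∀ j : ℤ, Jint D.μ j PB = PB.coeff 0 * Jint D.μ j (starP (2*n) (D.Φ (2*n)))
      + (PB.coeff (2*n) - PB.coeff 0 * cb) * Jint D.μ j (Polynomial.X * D.Φ (2*n-1)) := by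
    intro j
    calc Jint D.μ j PB = Jint D.μ j (Polynomial.C (PB.coeff 0) * starP (2*n) (D.Φ (2*n))
        + Polynomial.C (PB.coeff (2*n) - PB.coeff 0 * cb) * (Polynomial.X * D.Φ (2*n-1))) := by
          rw [← hdecB]
      _ = _ := by rw [Jint_add D.μ hc, Jint_Cmul D.μ hc, Jint_Cmul D.μ hc]
  have hJA : ∀ j : ℤ, Jint D.μ j PA = gA * Jint D.μ j (starP (2*n) (D.Φ (2*n)))
      + tA * Jint D.μ j (Polynomial.X * D.Φ (2*n-1)) := by
    intro j
    calc Jint D.μ j PA = Jint D.μ j (Polynomial.C gA * starP (2*n) (D.Φ (2*n))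
        + Polynomial.C tA * (Polynomial.X * D.Φ (2*n-1))) := by
          rw [← hdecA]
      _ = _ := by rw [Jint_add D.μ hc, Jint_Cmul D.μ hc, Jint_Cmul D.μ hc]
  have hJ0B : Jint D.μ 0 PB = -(2*I)⁻¹ * M2 + ((2*I)⁻¹ - (-(2*I)⁻¹) * cb) * (-c0 * M1) := by
    rw [hJB 0, hS0, hX0, hPB0, hPBtop]
  have hJ2B : Jint D.μ (-((2*n:ℕ):ℤ)) PB = ((2*I)⁻¹ - (-(2*I)⁻¹) * cb) * M1 := by
    rw [hJB _, hS2, hX2, hPB0, hPBtop, mul_zero, zero_add]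
  have hJ0A : Jint D.μ 0 PA = gA * M2 + tA * (-c0 * M1) := by
    rw [hJA 0, hS0, hX0]
  have hJ2A : Jint D.μ (-((2*n:ℕ):ℤ)) PA = tA * M1 := by
    rw [hJA _, hS2, hX2, mul_zero, zero_add]
  have e2n : (-(n:ℤ) + -(n:ℤ)) = -((2*n:ℕ):ℤ) := by push_cast; ring
  have e2n0 : (-((2*n:ℕ):ℤ)) + ((2*n:ℕ):ℤ) = 0 := by ring
  -- b-norm equation
  have hbnorm : ((D.b n : ℂ))^2 = (2*I)⁻¹ * (Jint D.μ 0 PB - Jint D.μ (-((2*n:ℕ):ℤ)) PB) := by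
    have h := D.b_norm n hn
    rw [int_pair D.μ hc _ _ (-(n:ℤ)) (-(n:ℤ)) PB PB hrepBae hrepBae, e2n] at h
    have hsplit : PB * PB = PB * psinP n + PB * (∑ k ∈ Finset.range n, Polynomial.X^(n-k) *
        (Polynomial.C ((cB k : ℂ)) * pcosP k + Polynomial.C ((dB k : ℂ)) * psinP k)) := by
      nth_rewrite 2 [hPBdef]
      rw [mul_add]
    rw [hsplit, Jint_add D.μ hc, Jint_norm_split D.μ hc n PB cB dB hBpair, add_zero,
      Jint_mul_psin D.μ hc _ n PB, e2n0] at h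
    exact h
  -- β equation
  have hβeq : (D.β n : ℂ) * ((D.b n:ℂ))^2
      = (1/2) * (Jint D.μ 0 PB + Jint D.μ (-((2*n:ℕ):ℤ)) PB) := by
    have h := D.β_def n hn
    have hrepB2 : ∀ᵐ τ ∂D.μ, ((D.b n:ℂ))⁻¹ * D.pii n τ
        = τ ^ (-(n:ℤ)) * (Polynomial.C ((((D.b n:ℂ))^2)⁻¹) * PB).eval τ := by
      filter_upwards [ae_ne_zero D.μ hc] with τ hτ
      have hb := hrepB τ hτ
      rw [Polynomial.eval_mul, Polynomial.eval_C]
      have hinv2 : (((D.b n:ℂ))^2)⁻¹ = ((D.b n:ℂ))⁻¹ * ((D.b n:ℂ))⁻¹ := by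
        rw [sq, mul_inv]
      have hpii : D.pii n τ = ((D.b n:ℂ))⁻¹ * (τ ^ (-(n:ℤ)) * Polynomial.eval τ PB) := by
        rw [← hb, inv_mul_cancel_left₀ hbne]
      rw [hpii, hinv2]
      ring
    rw [int_pair D.μ hc _ _ (-(n:ℤ)) (-(n:ℤ)) (pcosP n)
      (Polynomial.C ((((D.b n:ℂ))^2)⁻¹) * PB) (hcosae n) hrepB2, e2n] at h
    have hre : pcosP n * (Polynomial.C ((((D.b n:ℂ))^2)⁻¹) * PB)
        = Polynomial.C ((((D.b n:ℂ))^2)⁻¹) * (PB * pcosP n) := by ring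
    rw [hre, Jint_Cmul D.μ hc, Jint_mul_pcos D.μ hc, e2n0] at h
    rw [h]
    field_simp
  -- key A equation and a-norm
  have hkeyA : gA * M2 = tA * M1 * (1 + c0) := by
    have h := hAsin
    rw [hJ0A, hJ2A] at h
    linear_combination h
  have hanorm : ((D.a n:ℂ))^2 = tA * M1 := by
    have h := D.a_norm n hn
    rw [int_pair D.μ hc _ _ (-(n:ℤ)) (-(n:ℤ)) PA PA hrepAae hrepAae, e2n] at h
    have hsplit : PA * PA = PA * pcosP n + PA * (Polynomial.C ((e:ℝ):ℂ) * psinP n)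
        + PA * (∑ k ∈ Finset.range n, Polynomial.X^(n-k) *
          (Polynomial.C ((cA k : ℂ)) * pcosP k + Polynomial.C ((dA k : ℂ)) * psinP k)) := by
      nth_rewrite 2 [hPAdef]
      ring
    have hmid : Jint D.μ (-((2*n:ℕ):ℤ)) (PA * (Polynomial.C ((e:ℝ):ℂ) * psinP n)) = 0 := by
      have hre : PA * (Polynomial.C ((e:ℝ):ℂ) * psinP n)
          = Polynomial.C ((e:ℝ):ℂ) * (PA * psinP n) := by ring
      rw [hre, Jint_Cmul D.μ hc, Jint_mul_psin D.μ hc, e2n0, ← hAsin, sub_self, mul_zero,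
        mul_zero]
    rw [hsplit, Jint_add D.μ hc, Jint_add D.μ hc, Jint_norm_split D.μ hc n PA cA dA hApair,
      add_zero, hmid, add_zero, Jint_mul_pcos D.μ hc _ n PA, e2n0] at h
    rw [hJ0A, hJ2A] at h
    linear_combination h + (1/2) * hkeyA
  -- scalar algebra
  have hinvI : ((2*I : ℂ))⁻¹ = -I/2 := by
    refine inv_eq_of_mul_eq_one_right ?_
    linear_combination -Complex.I_mul_I
  rw [hJ0B, hJ2B, hinvI] at hbnorm hβeq
  have h4b2 : 4*((D.b n:ℂ))^2 = M2 + (1+cb)*(1+c0)*M1 := by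
    linear_combination 4*hbnorm - (M2 + (1+cb)*(1+c0)*M1)*Complex.I_mul_I
  have hb2S : 4 * ((D.b n:ℂ))^2 = M1 * (2+c0+cb) := by
    linear_combination h4b2 + hM2eq
  have hβ4 : 4*(D.β n:ℂ)*((D.b n:ℂ))^2 = I*(M2 + (1+cb)*(c0-1)*M1) := by
    linear_combination 4*hβeq
  have hβS : (D.β n:ℂ) * (M1*(2+c0+cb)) = I*M1*(c0-cb) := by
    linear_combination hβ4 + I*hM2eq - (D.β n:ℂ)*hb2S
  have htA0 : tA = 1 - gA - gA*cb := by
    rw [htAdef]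
    linear_combination hPAcoeffsum + cb*hgAdef
  have hMgA : M1*(gA*(2+c0+cb) - (1+c0)) = 0 := by
    linear_combination hkeyA - gA*hM2eq + M1*(1+c0)*htA0
  have hgAS : gA * (2+c0+cb) = 1 + c0 := by
    rcases mul_eq_zero.mp hMgA with h|h
    · exact absurd h hM1ne
    · exact sub_eq_zero.mp h
  have htAS : tA * (2+c0+cb) = 1 - c0*cb := by
    linear_combination (2+c0+cb)*htA0 - (1+cb)*hgAS
  have hSne : (2+c0+cb : ℂ) ≠ 0 := by
    intro h0
    refine hb2ne ?_
    have h4 : (4:ℂ)*((D.b n:ℂ))^2 = 0 := by rw [hb2S, h0, mul_zero]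
    linear_combination (1/4)*h4
  have htAne : tA ≠ 0 := by
    intro h0
    rw [h0, zero_mul] at hanorm
    exact ha2ne hanorm
  have h1cc : (1 - c0*cb : ℂ) ≠ 0 := by
    rw [← htAS]
    exact mul_ne_zero htAne hSne
  have hβval : (D.β n:ℂ) * (2+c0+cb) = I*(c0 - cb) := by
    have h0 : M1 * ((D.β n:ℂ)*(2+c0+cb) - I*(c0-cb)) = 0 := by linear_combination hβS
    rcases mul_eq_zero.mp h0 with h|h
    · exact absurd h hM1ne
    · exact sub_eq_zero.mp h
  have hgoal1 : 2 * gA = 1 - (D.β n:ℂ)*I := by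
    have h0 : (2*gA - (1 - (D.β n:ℂ)*I)) * (2+c0+cb) = 0 := by
      linear_combination 2*hgAS + I*hβval + (c0-cb)*Complex.I_mul_I
    rcases mul_eq_zero.mp h0 with h|h
    · exact sub_eq_zero.mp h
    · exact absurd h hSne
  -- solved forms
  have hb2' : ((D.b n:ℂ))^2 = M1*(2+c0+cb)/4 := by
    field_simp
    linear_combination hb2S
  have hβ' : (D.β n:ℂ) = I*(c0-cb)/(2+c0+cb) := by
    field_simp
    linear_combination hβval
  have htA' : tA = (1-c0*cb)/(2+c0+cb) := by
    field_simp
    linear_combination htAS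
  have ha2' : ((D.a n:ℂ))^2 = M1*(1-c0*cb)/(2+c0+cb) := by
    rw [hanorm, htA']
    ring
  have hβsq : ((D.β n:ℂ))^2 = -((c0-cb)^2)/(2+c0+cb)^2 := by
    rw [hβ', div_pow, mul_pow, Complex.I_sq]
    ring
  have hM1cc : M1*(1-c0*cb) ≠ 0 := mul_ne_zero hM1ne h1cc
  have hX : (((D.a n:ℂ))^2)⁻¹*(1+((D.β n:ℂ))^2) + (((D.b n:ℂ))^2)⁻¹
      = 4/(M1*(1-c0*cb)) := by
    rw [ha2', hβsq, hb2']
    field_simp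
    ring
  have hLamval : Lam D.toOTP n = -(1/2)*(4/(M1*(1-c0*cb)))*I := by
    rw [Lam, hX]
  have hLaminv : (Lam D.toOTP n)⁻¹ = M1*(1-c0*cb)/2 * I := by
    refine inv_eq_of_mul_eq_one_right ?_
    rw [hLamval]
    field_simp
    linear_combination (-4:ℂ)*Complex.I_sq
  have hcoef : -(1/2) * (Lam D.toOTP n)⁻¹ * (((D.b n:ℂ))^2)⁻¹ * I = tA := by
    rw [hLaminv, hb2', htA']
    have hMS : M1*(2+c0+cb) ≠ 0 := mul_ne_zero hM1ne hSne
    field_simp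
    linear_combination (-4:ℂ)*Complex.I_sq
  -- conclusion
  have hrep := hrepA z hz
  have hstarev := starP_eval_ne_zero (2*n) (D.Φ (2*n)) (le_of_eq hΦ2deg) z hz
  have hPAz : Polynomial.eval z PA = gA * Polynomial.eval z (starP (2*n) (D.Φ (2*n)))
      + tA * (z * Polynomial.eval z (D.Φ (2*n-1))) := by
    conv_lhs => rw [hdecA]
    simp [Polynomial.eval_add, Polynomial.eval_mul, Polynomial.eval_C, Polynomial.eval_X]
  have hzpow : z ^ (-(n:ℤ)) = ((z^n : ℂ))⁻¹ := by rw [zpow_neg, zpow_natCast]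
  rw [hrep, hzpow, hPAz, hstarev, revP]
  linear_combination ((z^n)⁻¹ * z^(2*n)
      * (starRingEnd ℂ) (Polynomial.eval (((starRingEnd ℂ) z)⁻¹) (D.Φ (2*n))) * (1/2)) * hgoal1
    - ((z^n)⁻¹ * z * Polynomial.eval z (D.Φ (2*n-1))) * hcoef
end
end

section
/- For every integer n ≥ 1, the Verblunsky coefficient α_{2n−1} satisfies α_{2n−1} = (1/4)κ_{2n}^{−2}[b_n^{−2} − a_n^{−2}(1 − β_n²)] − (1/2)κ_{2n}^{−2} a_n^{−2} β_n i. -/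
open MeasureTheory Complex Filter

noncomputable section

set_option linter.unusedSectionVars false
set_option maxHeartbeats 1000000

namespace VerbAux

def Nice (f : ℂ → ℂ) : Prop :=
  Measurable f ∧ ∃ C : ℝ, ∀ z : ℂ, ‖z‖ = 1 → ‖f z‖ ≤ C

lemma Nice.add {f g : ℂ → ℂ} (hf : Nice f) (hg : Nice g) : Nice (fun z => f z + g z) := by
  obtain ⟨mf, Cf, hCf⟩ := hf; obtain ⟨mg, Cg, hCg⟩ := hg
  exact ⟨mf.add mg, Cf + Cg, fun z hz =>
    le_trans (norm_add_le _ _) (add_le_add (hCf z hz) (hCg z hz))⟩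

lemma Nice.mul {f g : ℂ → ℂ} (hf : Nice f) (hg : Nice g) : Nice (fun z => f z * g z) := by
  obtain ⟨mf, Cf, hCf⟩ := hf; obtain ⟨mg, Cg, hCg⟩ := hg
  refine ⟨mf.mul mg, (max Cf 0) * (max Cg 0), fun z hz => ?_⟩
  rw [norm_mul]
  have h1 : ‖f z‖ ≤ max Cf 0 := le_trans (hCf z hz) (le_max_left Cf 0)
  have h2 : ‖g z‖ ≤ max Cg 0 := le_trans (hCg z hz) (le_max_left Cg 0)
  exact mul_le_mul h1 h2 (norm_nonneg _) (le_max_right Cf 0)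

lemma Nice.const_mul (c : ℂ) {f : ℂ → ℂ} (hf : Nice f) : Nice (fun z => c * f z) :=
  Nice.mul ⟨measurable_const, ‖c‖, fun _ _ => le_rfl⟩ hf

lemma Nice.sum {ι : Type*} {s : Finset ι} {F : ι → ℂ → ℂ} (h : ∀ i ∈ s, Nice (F i)) :
    Nice (fun z => ∑ i ∈ s, F i z) := by
  classical
  induction s using Finset.induction_on with
  | empty => exact ⟨by simpa using measurable_const, 0, by simp⟩
  | insert a s hni ih =>
    simp only [Finset.sum_insert hni]
    exact Nice.add (h a (Finset.mem_insert_self a s))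
      (ih fun i hi => h i (Finset.mem_insert_of_mem hi))

lemma nice_zpow (m : ℤ) : Nice (fun z : ℂ => z ^ m) := by
  constructor
  · rcases m with k | k
    · simpa using (measurable_id.pow_const k)
    · have h : Measurable fun z : ℂ => (z ^ (k + 1))⁻¹ :=
        ((measurable_id.pow_const (k + 1)) : Measurable fun z : ℂ => z ^ (k + 1)).inv
      simpa [zpow_negSucc] using h
  · exact ⟨1, fun z hz => by rw [norm_zpow, hz, one_zpow]⟩

lemma nice_pow (k : ℕ) : Nice (fun z : ℂ => z ^ k) := by
  simpa [zpow_natCast] using nice_zpow (k : ℤ)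

lemma nice_inv_pow (k : ℕ) : Nice (fun z : ℂ => (z ^ k)⁻¹) := by
  simpa [zpow_neg, zpow_natCast] using nice_zpow (-(k : ℤ))

lemma nice_cosL (k : ℕ) : Nice (cosL k) := by
  have := ((nice_pow k).add (nice_inv_pow k)).const_mul (2 : ℂ)⁻¹
  convert this using 2 with z
  · simp [cosL]; ring
lemma nice_sinL (k : ℕ) : Nice (sinL k) := by
  have h : Nice (fun z : ℂ => z ^ k + (-1 : ℂ) * (z ^ k)⁻¹) :=
    (nice_pow k).add ((nice_inv_pow k).const_mul (-1))
  have := h.const_mul ((2 : ℂ) * I)⁻¹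
  convert this using 2 with z
  · simp only [sinL]; ring

lemma nice_eval (p : Polynomial ℂ) : Nice (fun z => p.eval z) := by
  refine ⟨p.continuous.measurable, ∑ i ∈ Finset.range (p.natDegree + 1), ‖p.coeff i‖,
    fun z hz => ?_⟩
  simp only [Polynomial.eval_eq_sum_range]
  refine le_trans (norm_sum_le _ _) (Finset.sum_le_sum fun i _ => ?_)
  rw [norm_mul, norm_pow, hz, one_pow, mul_one]

set_option linter.unusedSectionVars false

variable {μ : Measure ℂ} [IsProbabilityMeasure μ]

lemma Nice.integrable {f : ℂ → ℂ} (hae : ∀ᵐ z ∂μ, ‖z‖ = 1) (hf : Nice f) :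
    Integrable f μ := by
  obtain ⟨mf, C, hC⟩ := hf
  refine Integrable.mono' (integrable_const C) mf.aestronglyMeasurable ?_
  filter_upwards [hae] with z hz
  simpa using hC z hz

lemma innR_comm (f g : ℂ → ℂ) : innR μ f g = innR μ g f := by
  simp [innR, mul_comm]

lemma innR_congr_right {f g g' : ℂ → ℂ} (h : g =ᵐ[μ] g') : innR μ f g = innR μ f g' := by
  refine integral_congr_ae ?_
  filter_upwards [h] with z hz; rw [hz]

lemma innR_congr_left {f f' g : ℂ → ℂ} (h : f =ᵐ[μ] f') : innR μ f g = innR μ f' g := by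
  refine integral_congr_ae ?_
  filter_upwards [h] with z hz; rw [hz]

lemma innR_const_mul_right (c : ℂ) (f g : ℂ → ℂ) :
    innR μ f (fun z => c * g z) = c * innR μ f g := by
  rw [innR, innR, ← integral_const_mul]
  congr 1; funext z; ring

lemma innR_add_right (hae : ∀ᵐ z ∂μ, ‖z‖ = 1) {f g h : ℂ → ℂ}
    (hf : Nice f) (hg : Nice g) (hh : Nice h) :
    innR μ f (fun z => g z + h z) = innR μ f g + innR μ f h := by
  rw [innR, innR, innR, ← integral_add ((hf.mul hg).integrable hae) ((hf.mul hh).integrable hae)]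
  congr 1; funext z; ring

lemma innR_sum_right (hae : ∀ᵐ z ∂μ, ‖z‖ = 1) {ι : Type*} {s : Finset ι}
    {f : ℂ → ℂ} {F : ι → ℂ → ℂ} (hf : Nice f) (hF : ∀ i ∈ s, Nice (F i)) :
    innR μ f (fun z => ∑ i ∈ s, F i z) = ∑ i ∈ s, innR μ f (F i) := by
  rw [innR, show (fun τ => f τ * ∑ i ∈ s, F i τ) = fun τ => ∑ i ∈ s, f τ * F i τ by
    funext τ; rw [Finset.mul_sum]]
  exact integral_finset_sum s fun i hi => (hf.mul (hF i hi)).integrable hae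


lemma innR_pair (hae : ∀ᵐ z ∂μ, ‖z‖ = 1) {g p q : ℂ → ℂ}
    (hg : Nice g) (hp : Nice p) (hq : Nice q) (u v : ℂ) :
    innR μ g (fun z => u * p z + v * q z) = u * innR μ g p + v * innR μ g q := by
  rw [innR_add_right hae hg (Nice.const_mul u hp) (Nice.const_mul v hq),
    innR_const_mul_right, innR_const_mul_right]

lemma innR_expand0 (hae : ∀ᵐ z ∂μ, ‖z‖ = 1) {g h : ℂ → ℂ}
    (hg : Nice g) (hh : Nice h) (c d : ℕ → ℝ) (n : ℕ)
    (horth : ∀ k, k < n → innR μ g (cosL k) = 0 ∧ innR μ g (sinL k) = 0) :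
    innR μ g (fun z => h z + ∑ k ∈ Finset.range n, ((c k : ℂ) * cosL k z + (d k : ℂ) * sinL k z))
      = innR μ g h := by
  have hterm : ∀ k ∈ Finset.range n, Nice (fun z => (c k : ℂ) * cosL k z + (d k : ℂ) * sinL k z) :=
    fun k _ => (Nice.const_mul _ (nice_cosL k)).add (Nice.const_mul _ (nice_sinL k))
  rw [innR_add_right hae hg hh (Nice.sum hterm), innR_sum_right hae hg hterm]
  have : ∀ k ∈ Finset.range n,
      innR μ g (fun z => (c k : ℂ) * cosL k z + (d k : ℂ) * sinL k z) = 0 := by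
    intro k hk
    rw [innR_pair hae hg (nice_cosL k) (nice_sinL k)]
    rw [(horth k (Finset.mem_range.mp hk)).1, (horth k (Finset.mem_range.mp hk)).2]
    ring
  rw [Finset.sum_congr rfl this]
  simp

lemma comb_cosL (u w : ℂ) : (u + w) / 2 + I * ((u - w) / (2 * I)) = u := by
  field_simp
  ring

lemma comb_sinL (u w : ℂ) : (u + w) / 2 + (-I) * ((u - w) / (2 * I)) = w := by
  field_simp
  ring

lemma innR_zpow_nat (hae : ∀ᵐ z ∂μ, ‖z‖ = 1) {g : ℂ → ℂ} (hg : Nice g) (k : ℕ) :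
    innR μ g (fun z => z ^ (k : ℤ)) = innR μ g (cosL k) + I * innR μ g (sinL k) := by
  have h1 : (fun z : ℂ => z ^ (k : ℤ)) = fun z => (1:ℂ) * cosL k z + I * sinL k z := by
    funext z
    rw [zpow_natCast, one_mul, cosL, sinL, comb_cosL]
  rw [h1, innR_pair hae hg (nice_cosL k) (nice_sinL k), one_mul]

lemma innR_zpow_neg (hae : ∀ᵐ z ∂μ, ‖z‖ = 1) {g : ℂ → ℂ} (hg : Nice g) (k : ℕ) :
    innR μ g (fun z => z ^ (-(k : ℤ))) = innR μ g (cosL k) - I * innR μ g (sinL k) := by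
  have h1 : (fun z : ℂ => z ^ (-(k : ℤ))) = fun z => (1:ℂ) * cosL k z + (-I) * sinL k z := by
    funext z
    rw [zpow_neg, zpow_natCast, one_mul, cosL, sinL, comb_sinL]
  rw [h1, innR_pair hae hg (nice_cosL k) (nice_sinL k), one_mul]
  ring

lemma innR_vanish_mid (hae : ∀ᵐ z ∂μ, ‖z‖ = 1) {g : ℂ → ℂ} (hg : Nice g) {n : ℕ}
    (horth : ∀ k, k < n → innR μ g (cosL k) = 0 ∧ innR μ g (sinL k) = 0)
    (m : ℤ) (h1 : -(n : ℤ) < m) (h2 : m < (n : ℤ)) :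
    innR μ g (fun z => z ^ m) = 0 := by
  rcases le_or_gt 0 m with hm | hm
  · have hk : m = ((m.toNat : ℕ) : ℤ) := (Int.toNat_of_nonneg hm).symm
    have hkn : m.toNat < n := by omega
    rw [show (fun z : ℂ => z ^ m) = fun z : ℂ => z ^ ((m.toNat : ℕ) : ℤ) by rw [← hk]]
    rw [innR_zpow_nat hae hg, (horth _ hkn).1, (horth _ hkn).2]
    ring
  · have hk : m = -(((-m).toNat : ℕ) : ℤ) := by omega
    have hkn : (-m).toNat < n := by omega
    rw [show (fun z : ℂ => z ^ m) = fun z : ℂ => z ^ (-(((-m).toNat : ℕ) : ℤ)) by rw [← hk]]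
    rw [innR_zpow_neg hae hg, (horth _ hkn).1, (horth _ hkn).2]
    ring

end VerbAux

open VerbAux

/-- The Verblunsky coefficients `α n = -conj (Φ (n+1) 0)`. -/
def verb (D : OPUC) (n : ℕ) : ℂ := -(starRingEnd ℂ) ((D.Φ (n + 1)).eval 0)

/-- For `n ≥ 1`,
`α_{2n-1} = (1/4) κ_{2n}^(-2) [b_n^(-2) - a_n^(-2)(1 - β_n²)] - (1/2) κ_{2n}^(-2) a_n^(-2) β_n i`. -/
theorem verblunsky_odd (D : OPUC) (n : ℕ) (hn : 1 ≤ n) :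
    verb D (2 * n - 1) =
      (1 / 4) * (((D.κ (2 * n) : ℂ)) ^ 2)⁻¹ *
          ((((D.b n : ℂ)) ^ 2)⁻¹ - (((D.a n : ℂ)) ^ 2)⁻¹ * (1 - (D.β n : ℂ) ^ 2))
        - (1 / 2) * (((D.κ (2 * n) : ℂ)) ^ 2)⁻¹ * (((D.a n : ℂ)) ^ 2)⁻¹ * (D.β n : ℂ) * I := by
  classical
  obtain ⟨c, d, hspanB⟩ := D.pii_span n hn
  obtain ⟨c', d', e, hspanS⟩ := D.sig_span n hn
  haveI hprob : IsProbabilityMeasure D.μ := D.prob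
  set μ := D.μ with hμdef
  have hae : ∀ᵐ z ∂μ, ‖z‖ = 1 := by
    rw [MeasureTheory.ae_iff]
    simpa [Set.compl_setOf] using D.circ
  have hne : ∀ᵐ z ∂μ, z ≠ 0 := by
    filter_upwards [hae] with z hz
    intro h0; rw [h0] at hz; simp at hz
  have hconjz : ∀ᵐ z ∂μ, (starRingEnd ℂ) z = z⁻¹ := by
    filter_upwards [hae] with z hz
    have h1 : z * (starRingEnd ℂ) z = 1 := by
      rw [Complex.mul_conj, ← Complex.sq_norm, hz]; norm_num
    exact (inv_eq_of_mul_eq_one_right h1).symm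
  set N := 2 * n with hNdef
  set Φ : Polynomial ℂ := D.Φ N with hΦdef
  have hdeg : Φ.natDegree = N := D.Φ_deg N
  have hmonic : Φ.coeff N = 1 := by
    have hm := D.Φ_monic N
    rw [Polynomial.Monic, Polynomial.leadingCoeff, hdeg] at hm
    exact hm
  have hb0 : ((D.b n : ℝ) : ℂ) ≠ 0 := by exact_mod_cast (D.hb n).ne'
  have ha0 : ((D.a n : ℝ) : ℂ) ≠ 0 := by exact_mod_cast (D.ha n).ne'
  have hκ0 : ((D.κ N : ℝ) : ℂ) ≠ 0 := by exact_mod_cast (D.κ_pos N).ne'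
  have hb2 : ((D.b n : ℂ)) ^ 2 ≠ 0 := pow_ne_zero _ hb0
  have ha2 : ((D.a n : ℂ)) ^ 2 ≠ 0 := pow_ne_zero _ ha0
  have hκ2 : ((D.κ N : ℂ)) ^ 2 ≠ 0 := pow_ne_zero _ hκ0
  -- vanishing moments
  have hvan : ∀ m : ℤ, -(N : ℤ) < m → m ≤ 0 → ∫ z, z ^ m * Φ.eval z ∂μ = 0 := by
    intro m h1 h2
    have hj : (-m).toNat < N := by omega
    have h0 := D.Φ_orth N (-m).toNat hj
    rw [← h0]
    apply integral_congr_ae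
    filter_upwards [hconjz, hne] with z hz hz0
    have he1 : (starRingEnd ℂ) (z ^ (-m).toNat) = z ^ m := by
      rw [map_pow, hz, inv_pow, ← zpow_natCast z, ← zpow_neg]
      congr 1
      omega
    rw [he1]
  set f : ℂ → ℂ := fun z => (z ^ n)⁻¹ * Φ.eval z with hfdef
  have hfN : Nice f := (nice_inv_pow n).mul (nice_eval Φ)
  have hmonf : ∀ m : ℤ, -(n : ℤ) < m → m ≤ (n : ℤ) → innR μ f (fun z => z ^ m) = 0 := by
    intro m h1 h2
    have hcg : (fun τ => f τ * τ ^ m) =ᵐ[μ] fun z => z ^ (m - (n : ℤ)) * Φ.eval z := by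
      filter_upwards [hne] with z hz0
      simp only [hfdef]
      rw [zpow_sub₀ hz0, zpow_natCast]
      field_simp
    rw [innR, integral_congr_ae hcg]
    exact hvan _ (by omega) (by omega)
  have hfcs : ∀ k, k < n → innR μ f (cosL k) = 0 ∧ innR μ f (sinL k) = 0 := by
    intro k hk
    constructor
    · have h1 : cosL k = fun z : ℂ => (2 : ℂ)⁻¹ * z ^ ((k : ℤ)) + (2 : ℂ)⁻¹ * z ^ (-(k : ℤ)) := by
        funext z; rw [cosL, zpow_natCast, zpow_neg, zpow_natCast]; ring
      rw [h1, innR_pair hae hfN (nice_zpow _) (nice_zpow _),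
        hmonf _ (by omega) (by omega), hmonf _ (by omega) (by omega)]
      ring
    · have h1 : sinL k = fun z : ℂ =>
          (2 * I : ℂ)⁻¹ * z ^ ((k : ℤ)) + (-(2 * I : ℂ)⁻¹) * z ^ (-(k : ℤ)) := by
        funext z; rw [sinL, zpow_natCast, zpow_neg, zpow_natCast]; ring
      rw [h1, innR_pair hae hfN (nice_zpow _) (nice_zpow _),
        hmonf _ (by omega) (by omega), hmonf _ (by omega) (by omega)]
      ring
  -- C and S relations
  have hzn : innR μ f (fun z => z ^ ((n : ℤ))) = 0 := hmonf _ (by omega) (by omega)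
  have hCS : innR μ f (cosL n) + I * innR μ f (sinL n) = 0 := by
    rw [← innR_zpow_nat hae hfN, hzn]
  have hw : innR μ f (fun z => z ^ (-(n : ℤ))) = ∫ z, z ^ (-(N : ℤ)) * Φ.eval z ∂μ := by
    rw [innR]
    apply integral_congr_ae
    filter_upwards [hne] with z hz0
    simp only [hfdef]
    rw [show -(N : ℤ) = -(n : ℤ) + -(n : ℤ) by omega, zpow_add₀ hz0]
    rw [zpow_neg, zpow_natCast]
    ring
  have hCSw : innR μ f (cosL n) - I * innR μ f (sinL n) = ∫ z, z ^ (-(N : ℤ)) * Φ.eval z ∂μ := by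
    rw [← innR_zpow_neg hae hfN, hw]
  -- value of T
  have hT : (∫ z, z ^ (-(N : ℤ)) * Φ.eval z ∂μ) = (((D.κ N : ℂ)) ^ 2)⁻¹ := by
    have hconjΦ : (fun z => (starRingEnd ℂ) (Φ.eval z) * Φ.eval z) =ᵐ[μ]
        fun z => ∑ j ∈ Finset.range (N + 1),
          (starRingEnd ℂ) (Φ.coeff j) * (z ^ (-(j : ℤ)) * Φ.eval z) := by
      filter_upwards [hconjz, hne] with z hz hz0
      have e1 : (starRingEnd ℂ) (Φ.eval z) =
          ∑ j ∈ Finset.range (N + 1), (starRingEnd ℂ) (Φ.coeff j) * z ^ (-(j : ℤ)) := by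
        conv_lhs => rw [Polynomial.eval_eq_sum_range]
        rw [hdeg, map_sum]
        refine Finset.sum_congr rfl fun j hj => ?_
        rw [map_mul, map_pow, hz, inv_pow, ← zpow_natCast z, ← zpow_neg]
      rw [e1, Finset.sum_mul]
      refine Finset.sum_congr rfl fun j hj => ?_
      ring
    have hint : ∫ z, (starRingEnd ℂ) (Φ.eval z) * Φ.eval z ∂μ
        = ∑ j ∈ Finset.range (N + 1),
            (starRingEnd ℂ) (Φ.coeff j) * ∫ z, z ^ (-(j : ℤ)) * Φ.eval z ∂μ := by
      rw [integral_congr_ae hconjΦ, integral_finset_sum]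
      · exact Finset.sum_congr rfl fun j hj => integral_const_mul _ _
      · intro j hj
        exact (Nice.const_mul _ ((nice_zpow _).mul (nice_eval Φ))).integrable hae
    have hsub : ({N} : Finset ℕ) ⊆ Finset.range (N + 1) := by
      intro x hx; simp at hx ⊢; omega
    have hmid : ∀ j ∈ Finset.range (N + 1), j ∉ ({N} : Finset ℕ) →
        (starRingEnd ℂ) (Φ.coeff j) * ∫ z, z ^ (-(j : ℤ)) * Φ.eval z ∂μ = 0 := by
      intro j hj hj'
      simp only [Finset.mem_range] at hj
      simp only [Finset.mem_singleton] at hj'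
      rw [hvan (-(j : ℤ)) (by omega) (by omega), mul_zero]
    rw [← Finset.sum_subset hsub hmid, Finset.sum_singleton, hmonic, map_one, one_mul] at hint
    have habs : ∫ z, (starRingEnd ℂ) (Φ.eval z) * Φ.eval z ∂μ
        = ((∫ z, ‖Φ.eval z‖ ^ 2 ∂μ : ℝ) : ℂ) := by
      have h0 : ∫ z, (starRingEnd ℂ) (Φ.eval z) * Φ.eval z ∂μ
          = ∫ z, ((‖Φ.eval z‖ ^ 2 : ℝ) : ℂ) ∂μ := by
        apply integral_congr_ae
        filter_upwards with z
        rw [Complex.sq_norm, mul_comm, Complex.mul_conj]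
      rw [h0]
      exact integral_ofReal
    have hκdef := D.κ_def N
    have h2 : (∫ z, ‖Φ.eval z‖ ^ 2 ∂μ) = ((D.κ N) ^ 2)⁻¹ :=
      eq_inv_of_mul_eq_one_right hκdef
    rw [← hint, habs, h2]
    push_cast
    ring
  -- the trigonometric orthonormal system, as Laurent polynomials
  set Bp : ℂ → ℂ := fun z => sinL n z +
      ∑ k ∈ Finset.range n, ((c k : ℂ) * cosL k z + (d k : ℂ) * sinL k z) with hBpdef
  set Sg : ℂ → ℂ := fun z => cosL n z + (e : ℂ) * sinL n z +
      ∑ k ∈ Finset.range n, ((c' k : ℂ) * cosL k z + (d' k : ℂ) * sinL k z) with hSgdef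
  have hsumN : ∀ (u v : ℕ → ℝ), Nice (fun z => ∑ k ∈ Finset.range n,
      ((u k : ℂ) * cosL k z + (v k : ℂ) * sinL k z)) := fun u v =>
    Nice.sum fun k _ => (Nice.const_mul _ (nice_cosL k)).add (Nice.const_mul _ (nice_sinL k))
  have hBpN : Nice Bp := (nice_sinL n).add (hsumN c d)
  have hheadN : Nice (fun z => cosL n z + (e : ℂ) * sinL n z) :=
    (nice_cosL n).add (Nice.const_mul _ (nice_sinL n))
  have hSgN : Nice Sg := hheadN.add (hsumN c' d')
  have hBpae : (fun z => (D.b n : ℂ) * D.pii n z) =ᵐ[μ] Bp := by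
    filter_upwards [hne] with z hz0
    exact hspanB z hz0
  have hSgae : (fun z => (D.a n : ℂ) * D.sig n z) =ᵐ[μ] Sg := by
    filter_upwards [hne] with z hz0
    exact hspanS z hz0
  have horthB : ∀ k, k < n → innR μ Bp (cosL k) = 0 ∧ innR μ Bp (sinL k) = 0 := by
    intro k hk
    obtain ⟨h1, h2⟩ := D.pii_orth n hn k hk
    rw [innR_congr_left hBpae] at h1 h2
    exact ⟨h1, h2⟩
  have horthS : ∀ k, k < n → innR μ Sg (cosL k) = 0 ∧ innR μ Sg (sinL k) = 0 := by
    intro k hk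
    obtain ⟨h1, h2⟩ := (D.sig_orth n hn).1 k hk
    rw [innR_congr_left hSgae] at h1 h2
    exact ⟨h1, h2⟩
  have hsinS : innR μ Sg (sinL n) = 0 := by
    have h1 := (D.sig_orth n hn).2
    rw [innR_congr_left hSgae] at h1
    exact h1
  -- ⟨Bp, sinL n⟩ = b²
  have hY : innR μ Bp (sinL n) = ((D.b n : ℂ)) ^ 2 := by
    have h1 := D.b_norm n hn
    rw [innR_congr_left hBpae, innR_congr_right hBpae] at h1
    have h2 : innR μ Bp Bp = innR μ Bp (sinL n) :=
      innR_expand0 hae hBpN (nice_sinL n) c d n horthB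
    rw [h1, h2]
  -- ⟨Bp, cosL n⟩ = b² β
  have hX : innR μ Bp (cosL n) = ((D.b n : ℂ)) ^ 2 * (D.β n : ℂ) := by
    have h1 := D.β_def n hn
    have h2 : (fun z => ((D.b n : ℂ))⁻¹ * D.pii n z)
        = fun z => (((D.b n : ℂ)) ^ 2)⁻¹ * ((D.b n : ℂ) * D.pii n z) := by
      funext z
      field_simp
    rw [h2, innR_const_mul_right, innR_congr_right hBpae, innR_comm] at h1
    rw [h1]
    field_simp
  -- ⟨Sg, cosL n⟩ = a²
  have hA : innR μ Sg (cosL n) = ((D.a n : ℂ)) ^ 2 := by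
    have h1 := D.a_norm n hn
    rw [innR_congr_left hSgae, innR_congr_right hSgae] at h1
    have h2 : innR μ Sg Sg = innR μ Sg (fun z => cosL n z + (e : ℂ) * sinL n z) :=
      innR_expand0 hae hSgN hheadN c' d' n horthS
    rw [innR_add_right hae hSgN (nice_cosL n) (Nice.const_mul _ (nice_sinL n)),
      innR_const_mul_right, hsinS] at h2
    rw [h1, h2]
    ring
  -- e = -β
  have he : (e : ℂ) = -(D.β n : ℂ) := by
    have hSB : innR μ Sg Bp = 0 := by
      have h2 : innR μ Sg Bp = innR μ Sg (sinL n) :=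
        innR_expand0 hae hSgN (nice_sinL n) c d n horthS
      rw [h2, hsinS]
    have hBS : innR μ Bp Sg = innR μ Bp (fun z => cosL n z + (e : ℂ) * sinL n z) :=
      innR_expand0 hae hBpN hheadN c' d' n horthB
    rw [innR_add_right hae hBpN (nice_cosL n) (Nice.const_mul _ (nice_sinL n)),
      innR_const_mul_right, hX, hY, innR_comm, hSB] at hBS
    have h3 : ((D.b n : ℂ)) ^ 2 * ((e : ℂ) + (D.β n : ℂ)) = 0 := by linear_combination -hBS
    rcases mul_eq_zero.mp h3 with h | h
    · exact absurd h hb2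
    · linear_combination h
  -- pairing of Bp/Sg against f reduces to the endpoint monomials
  have hend : ∀ g : ℂ → ℂ, Nice g →
      (∀ k, k < n → innR μ g (cosL k) = 0 ∧ innR μ g (sinL k) = 0) →
      innR μ g f = Φ.coeff 0 * innR μ g (fun z => z ^ (-(n : ℤ)))
        + innR μ g (fun z => z ^ ((n : ℤ))) := by
    intro g hg horth
    have hfeq : f =ᵐ[μ] fun z => ∑ j ∈ Finset.range (N + 1),
        Φ.coeff j * z ^ ((j : ℤ) - (n : ℤ)) := by
      filter_upwards [hne] with z hz0
      simp only [hfdef]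
      conv_lhs => rw [Polynomial.eval_eq_sum_range]
      rw [hdeg, Finset.mul_sum]
      refine Finset.sum_congr rfl fun j hj => ?_
      rw [zpow_sub₀ hz0, zpow_natCast, zpow_natCast]
      field_simp
    rw [innR_congr_right hfeq,
      innR_sum_right hae hg (fun j _ => Nice.const_mul _ (nice_zpow _))]
    have hterm : ∀ j ∈ Finset.range (N + 1),
        innR μ g (fun z => Φ.coeff j * z ^ ((j : ℤ) - (n : ℤ)))
          = Φ.coeff j * innR μ g (fun z => z ^ ((j : ℤ) - (n : ℤ))) :=
      fun j _ => innR_const_mul_right _ _ _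
    rw [Finset.sum_congr rfl hterm]
    have hsub : ({0, N} : Finset ℕ) ⊆ Finset.range (N + 1) := by
      intro x hx
      simp only [Finset.mem_insert, Finset.mem_singleton] at hx
      simp only [Finset.mem_range]
      omega
    have hmid : ∀ j ∈ Finset.range (N + 1), j ∉ ({0, N} : Finset ℕ) →
        Φ.coeff j * innR μ g (fun z => z ^ ((j : ℤ) - (n : ℤ))) = 0 := by
      intro j hj hj'
      simp only [Finset.mem_range] at hj
      simp only [Finset.mem_insert, Finset.mem_singleton] at hj'
      rw [innR_vanish_mid hae hg horth ((j : ℤ) - (n : ℤ)) (by omega) (by omega), mul_zero]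
    rw [← Finset.sum_subset hsub hmid, Finset.sum_pair (show (0 : ℕ) ≠ N by omega),
      hmonic, one_mul, show ((0 : ℕ) : ℤ) - (n : ℤ) = -(n : ℤ) by push_cast; ring,
      show ((N : ℕ) : ℤ) - (n : ℤ) = (n : ℤ) by omega]
  -- the two evaluations of ⟨Bp, f⟩ and ⟨Sg, f⟩
  have eqP : Φ.coeff 0 * (((D.b n : ℂ)) ^ 2 * (D.β n : ℂ) - I * ((D.b n : ℂ)) ^ 2)
      + (((D.b n : ℂ)) ^ 2 * (D.β n : ℂ) + I * ((D.b n : ℂ)) ^ 2)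
      = innR μ f (sinL n) := by
    have h1 := hend Bp hBpN horthB
    rw [innR_zpow_neg hae hBpN, innR_zpow_nat hae hBpN, hX, hY] at h1
    have h2 : innR μ Bp f = innR μ f (sinL n) := by
      rw [innR_comm]
      exact innR_expand0 hae hfN (nice_sinL n) c d n hfcs
    rw [← h1, h2]
  have eqQ : Φ.coeff 0 * ((D.a n : ℂ)) ^ 2 + ((D.a n : ℂ)) ^ 2
      = innR μ f (cosL n) + (e : ℂ) * innR μ f (sinL n) := by
    have h2 : innR μ Sg f = innR μ f (cosL n) + (e : ℂ) * innR μ f (sinL n) := by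
      rw [innR_comm]
      have h3 : innR μ f Sg = innR μ f (fun z => cosL n z + (e : ℂ) * sinL n z) :=
        innR_expand0 hae hfN hheadN c' d' n hfcs
      rw [h3, innR_add_right hae hfN (nice_cosL n) (Nice.const_mul _ (nice_sinL n)),
        innR_const_mul_right]
    have h1 := hend Sg hSgN horthS
    rw [innR_zpow_neg hae hSgN, innR_zpow_nat hae hSgN, hA, hsinS, h2] at h1
    linear_combination -h1
  -- solve for S and C
  have hKinv : ((D.κ N : ℂ)) ^ 2 * (((D.κ N : ℂ)) ^ 2)⁻¹ = 1 := mul_inv_cancel₀ hκ2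
  have hS : innR μ f (sinL n) = I * (((D.κ N : ℂ)) ^ 2)⁻¹ / 2 := by
    have h1 : (2 : ℂ) * I * innR μ f (sinL n) = -(((D.κ N : ℂ)) ^ 2)⁻¹ := by
      linear_combination hCS - hCSw - hT
    linear_combination (-(I / 2)) * h1 + innR μ f (sinL n) * Complex.I_sq
  have hC : innR μ f (cosL n) = (((D.κ N : ℂ)) ^ 2)⁻¹ / 2 := by
    have h1 : (2 : ℂ) * innR μ f (cosL n) = (((D.κ N : ℂ)) ^ 2)⁻¹ := by
      linear_combination hCS + hCSw + hT
    linear_combination h1 / 2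
  rw [hS] at eqP
  rw [hS, hC, he] at eqQ
  -- conjugate of the constant coefficient
  have eqQc : (starRingEnd ℂ) (Φ.coeff 0) * ((D.a n : ℂ)) ^ 2 + ((D.a n : ℂ)) ^ 2
      = (((D.κ N : ℂ)) ^ 2)⁻¹ / 2 + (D.β n : ℂ) * (I * (((D.κ N : ℂ)) ^ 2)⁻¹ / 2) := by
    have h1 := congrArg (starRingEnd ℂ) eqQ
    simp only [map_add, map_mul, map_neg, map_div₀, map_inv₀, map_pow, map_ofNat,
      Complex.conj_ofReal, Complex.conj_I] at h1
    linear_combination h1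
  -- the relation 4κ²a²b² = a² + b²(1+β²)
  have hrel : 4 * ((D.κ N : ℂ)) ^ 2 * ((D.a n : ℂ)) ^ 2 * ((D.b n : ℂ)) ^ 2
      = ((D.a n : ℂ)) ^ 2 + ((D.b n : ℂ)) ^ 2 * (1 + (D.β n : ℂ) ^ 2) := by
    linear_combination (2 * ((D.κ N : ℂ)) ^ 2 * I * (((D.b n : ℂ)) ^ 2 * (D.β n : ℂ) - I * ((D.b n : ℂ)) ^ 2)) * eqQ
      + (I * (((D.b n : ℂ)) ^ 2 * (D.β n : ℂ) - I * ((D.b n : ℂ)) ^ 2) * (1 - (D.β n : ℂ) * I) - I * ((D.a n : ℂ)) ^ 2 * I) * hKinv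
      - (2 * ((D.κ N : ℂ)) ^ 2 * I * ((D.a n : ℂ)) ^ 2) * eqP
      + (4 * ((D.κ N : ℂ)) ^ 2 * ((D.a n : ℂ)) ^ 2 * ((D.b n : ℂ)) ^ 2 - ((D.a n : ℂ)) ^ 2 - ((D.b n : ℂ)) ^ 2 - ((D.b n : ℂ)) ^ 2 * (D.β n : ℂ) ^ 2 + ((D.b n : ℂ)) ^ 2 * (D.β n : ℂ) * I) * Complex.I_sq
  -- cleared conjugate equation
  have E1c : 2 * ((D.κ N : ℂ)) ^ 2 * ((D.a n : ℂ)) ^ 2 * (1 + (starRingEnd ℂ) (Φ.coeff 0))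
      = 1 + (D.β n : ℂ) * I := by
    linear_combination 2 * ((D.κ N : ℂ)) ^ 2 * eqQc + (1 + (D.β n : ℂ) * I) * hKinv
  -- finish
  have hNred : N - 1 + 1 = N := by omega
  simp only [verb, hNred, ← hΦdef, ← Polynomial.coeff_zero_eq_eval_zero]
  field_simp
  linear_combination (-4 * ((D.b n : ℂ)) ^ 2) * E1c + 2 * hrel
end
end
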